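/- arXiv:1312.0034 — 5 statements merged into one kernel-verified Lean document; each statement's English description precedes it below -/
import Mathlib

section
/- The period map Φ is injective on the open disk {u ∈ ℂ_p : |u| < |π|^{1/(q+1)}}: if u, u' ∈ ℂ_p satisfy |u| < |π|^{1/(q+1)}, |u'| < |π|^{1/(q+1)} and φ_0(u)·φ_1(u') = φ_1(u)·φ_0(u'), then u = u'. -/
open Filter


/-- The coefficients `m_k(u)` of the quasi-logarithm of the Gross-Hopkins
universal deformation: `m_0 = 1`, `m_1(u) = u/π`, and
`m_k(u) = (u/π)·m_{k-1}(u^q) + (1/π)·m_{k-2}(u^{q²})`. -/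
noncomputable def ghm {C : Type*} [Field C] (π : C) (q : ℕ) : ℕ → C → C
  | 0, _ => 1
  | 1, u => u / π
  | (k+2), u => (u / π) * ghm π q (k+1) (u ^ q) + (1 / π) * ghm π q k (u ^ (q^2))

/-- First coordinate of the Gross-Hopkins period map:
`φ₀(u) = lim_k π^k · m_{2k}(u)`. -/
noncomputable def ghphi0 {C : Type*} [NormedField C] (π : C) (q : ℕ) (u : C) : C :=
  limUnder atTop (fun k => π ^ k * ghm π q (2*k) u)

/-- Second coordinate of the Gross-Hopkins period map:
`φ₁(u) = lim_{k≥1} π^k · m_{2k-1}(u)`. -/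
noncomputable def ghphi1 {C : Type*} [NormedField C] (π : C) (q : ℕ) (u : C) : C :=
  limUnder atTop (fun k => π ^ (k+1) * ghm π q (2*k+1) u)

open Topology

namespace GHAux
set_option linter.unusedSectionVars false
variable {C : Type*} [NormedField C] [IsUltrametricDist C]

lemma ghm_add_two (π : C) (q n : ℕ) (u : C) :
    ghm π q (n+2) u = (u / π) * ghm π q (n+1) (u ^ q) + (1 / π) * ghm π q n (u ^ (q^2)) := rfl

noncomputable def A (π : C) (q k : ℕ) (u : C) : C := π ^ k * ghm π q (2*k) u
noncomputable def B (π : C) (q k : ℕ) (u : C) : C := π ^ (k+1) * ghm π q (2*k+1) u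

lemma A_zero (π : C) (q : ℕ) (u : C) : A π q 0 u = 1 := by simp [A, ghm]

lemma B_zero {π : C} (hπ : π ≠ 0) (q : ℕ) (u : C) : B π q 0 u = u := by
  simp only [B, ghm]; field_simp; ring

lemma A_succ {π : C} (hπ : π ≠ 0) (q k : ℕ) (u : C) :
    A π q (k+1) u = A π q k (u ^ (q^2)) + (u / π) * B π q k (u ^ q) := by
  rw [A, show 2*(k+1) = 2*k+2 from by ring, ghm_add_two]
  simp only [A, B]; field_simp; ring

lemma B_succ {π : C} (hπ : π ≠ 0) (q k : ℕ) (u : C) :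
    B π q (k+1) u = B π q k (u ^ (q^2)) + u * A π q (k+1) (u ^ q) := by
  rw [B, show 2*(k+1)+1 = (2*k+1)+2 from by ring, ghm_add_two,
    show 2*k+1+1 = 2*(k+1) from by ring]
  simp only [A, B]; field_simp; ring

lemma nmax (a b : C) : ‖a + b‖ ≤ max ‖a‖ ‖b‖ := IsUltrametricDist.norm_add_le_max a b

lemma norm_le_one_of_hyp {π u : C} {q : ℕ} (hπ1 : ‖π‖ ≤ 1) (hu : ‖u‖^(q+1) ≤ ‖π‖) :
    ‖u‖ ≤ 1 := by
  by_contra h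
  push_neg at h
  have : (1:ℝ) < ‖u‖^(q+1) := one_lt_pow₀ h (Nat.succ_ne_zero q)
  linarith

lemma pow_hyp_le {π u : C} {q : ℕ} (hπ1 : ‖π‖ ≤ 1) (hu : ‖u‖^(q+1) ≤ ‖π‖) {n : ℕ}
    (hn : 1 ≤ n) : ‖u ^ n‖^(q+1) ≤ ‖u‖^(q+1) := by
  rw [norm_pow, ← pow_mul]
  exact pow_le_pow_of_le_one (norm_nonneg u) (norm_le_one_of_hyp hπ1 hu)
    (Nat.le_mul_of_pos_left _ hn)

lemma pow_hyp {π u : C} {q : ℕ} (hπ1 : ‖π‖ ≤ 1) (hu : ‖u‖^(q+1) ≤ ‖π‖) {n : ℕ}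
    (hn : 1 ≤ n) : ‖u ^ n‖^(q+1) ≤ ‖π‖ :=
  (pow_hyp_le hπ1 hu hn).trans hu

lemma bound {π : C} {q : ℕ} (hπ0 : 0 < ‖π‖) (hπ1 : ‖π‖ ≤ 1) (hq : 2 ≤ q) :
    ∀ k (u : C), ‖u‖^(q+1) ≤ ‖π‖ →
      ‖A π q k u - 1‖ ≤ ‖u‖^(q+1)/‖π‖ ∧ ‖B π q k u - u‖ ≤ ‖u‖^(q+1)/‖π‖ * ‖u‖ := by
  have hπ : (π:C) ≠ 0 := norm_pos_iff.mp hπ0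
  have hq1 : 1 ≤ q := by omega
  have hq2 : 1 ≤ q^2 := by nlinarith
  intro k
  induction k with
  | zero =>
    intro u hu
    rw [A_zero, B_zero hπ]
    simp only [sub_self, norm_zero]
    constructor <;> positivity
  | succ k ih =>
    have hA : ∀ u : C, ‖u‖^(q+1) ≤ ‖π‖ → ‖A π q (k+1) u - 1‖ ≤ ‖u‖^(q+1)/‖π‖ := by
      intro u hu
      have hu0 : (0:ℝ) ≤ ‖u‖ := norm_nonneg u
      have hu1 := norm_le_one_of_hyp hπ1 hu
      have huq : ‖u^q‖^(q+1) ≤ ‖π‖ := pow_hyp hπ1 hu hq1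
      have huq2 : ‖u^(q^2)‖^(q+1) ≤ ‖π‖ := pow_hyp hπ1 hu hq2
      have h1 := (ih (u^(q^2)) huq2).1
      have h2 := (ih (u^q) huq).2
      have hBn : ‖B π q k (u^q)‖ ≤ ‖u^q‖ := by
        have hm : ‖(B π q k (u^q) - u^q) + u^q‖ ≤ max ‖B π q k (u^q) - u^q‖ ‖u^q‖ := nmax _ _
        rw [sub_add_cancel] at hm
        refine hm.trans (max_le (h2.trans ?_) le_rfl)
        have hr1 : ‖u^q‖^(q+1)/‖π‖ ≤ 1 := (div_le_one hπ0).mpr huq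
        nlinarith [norm_nonneg (u^q)]
      rw [A_succ hπ, show A π q k (u ^ q^2) + u / π * B π q k (u ^ q) - 1
          = (A π q k (u ^ q^2) - 1) + (u / π * B π q k (u ^ q)) from by ring]
      refine (nmax _ _).trans (max_le (h1.trans ?_) ?_)
      · exact (div_le_div_iff_of_pos_right hπ0).mpr (pow_hyp_le hπ1 hu hq2)
      · rw [norm_mul, norm_div]
        calc ‖u‖/‖π‖ * ‖B π q k (u^q)‖ ≤ ‖u‖/‖π‖ * ‖u^q‖ :=
              mul_le_mul_of_nonneg_left hBn (by positivity)
          _ = ‖u‖^(q+1)/‖π‖ := by rw [norm_pow]; ring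
    intro u hu
    have hu0 : (0:ℝ) ≤ ‖u‖ := norm_nonneg u
    have hu1 := norm_le_one_of_hyp hπ1 hu
    have huq : ‖u^q‖^(q+1) ≤ ‖π‖ := pow_hyp hπ1 hu hq1
    have huq2 : ‖u^(q^2)‖^(q+1) ≤ ‖π‖ := pow_hyp hπ1 hu hq2
    refine ⟨hA u hu, ?_⟩
    rw [B_succ hπ, show B π q k (u ^ q^2) + u * A π q (k+1) (u ^ q) - u
        = ((B π q k (u ^ q^2) - u^(q^2)) + u^(q^2)) + (u * (A π q (k+1) (u ^ q) - 1)) from by ring]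
    have hbig : q + 2 ≤ q^2 := by nlinarith
    have hpows : ‖u‖^(q^2) ≤ ‖u‖^(q+2) := pow_le_pow_of_le_one hu0 hu1 hbig
    have hdivfact : ‖u‖^(q+1) ≤ ‖u‖^(q+1)/‖π‖ := by
      rw [le_div_iff₀ hπ0]; nlinarith [pow_nonneg hu0 (q+1)]
    refine (nmax _ _).trans (max_le ((nmax _ _).trans (max_le ?_ ?_)) ?_)
    · refine ((ih (u^(q^2)) huq2).2).trans ?_
      have e1 : ‖u^(q^2)‖^(q+1)/‖π‖ ≤ ‖u‖^(q+1)/‖π‖ :=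
        (div_le_div_iff_of_pos_right hπ0).mpr (pow_hyp_le hπ1 hu hq2)
      have e2 : ‖u^(q^2)‖ ≤ ‖u‖ := by
        rw [norm_pow]; exact pow_le_of_le_one hu0 hu1 (by omega)
      have h3 : (0:ℝ) ≤ ‖u^(q^2)‖^(q+1)/‖π‖ := by positivity
      exact mul_le_mul e1 e2 (norm_nonneg _) (by positivity)
    · rw [norm_pow]
      calc ‖u‖^(q^2) ≤ ‖u‖^(q+2) := hpows
        _ = ‖u‖^(q+1) * ‖u‖ := by ring
        _ ≤ ‖u‖^(q+1)/‖π‖ * ‖u‖ := mul_le_mul_of_nonneg_right hdivfact hu0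
    · rw [norm_mul]
      calc ‖u‖ * ‖A π q (k+1) (u^q) - 1‖ ≤ ‖u‖ * (‖u^q‖^(q+1)/‖π‖) :=
            mul_le_mul_of_nonneg_left (hA (u^q) huq) hu0
        _ ≤ ‖u‖ * (‖u‖^(q+1)/‖π‖) := by
            exact mul_le_mul_of_nonneg_left ((div_le_div_iff_of_pos_right hπ0).mpr (pow_hyp_le hπ1 hu hq1)) hu0
        _ = ‖u‖^(q+1)/‖π‖ * ‖u‖ := by ring

lemma normB_le {π : C} {q : ℕ} (hπ0 : 0 < ‖π‖) (hπ1 : ‖π‖ ≤ 1) (hq : 2 ≤ q)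
    (k : ℕ) (u : C) (hu : ‖u‖^(q+1) ≤ ‖π‖) : ‖B π q k u‖ ≤ ‖u‖ := by
  have h2 := (bound hπ0 hπ1 hq k u hu).2
  have hm : ‖(B π q k u - u) + u‖ ≤ max ‖B π q k u - u‖ ‖u‖ := nmax _ _
  rw [sub_add_cancel] at hm
  refine hm.trans (max_le (h2.trans ?_) le_rfl)
  have hr1 : ‖u‖^(q+1)/‖π‖ ≤ 1 := (div_le_one hπ0).mpr hu
  nlinarith [norm_nonneg u]

lemma normA_le_one {π : C} {q : ℕ} (hπ0 : 0 < ‖π‖) (hπ1 : ‖π‖ ≤ 1) (hq : 2 ≤ q)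
    (k : ℕ) (u : C) (hu : ‖u‖^(q+1) ≤ ‖π‖) : ‖A π q k u‖ ≤ 1 := by
  have h1 := (bound hπ0 hπ1 hq k u hu).1
  have hm : ‖(A π q k u - 1) + 1‖ ≤ max ‖A π q k u - 1‖ ‖(1:C)‖ := nmax _ _
  rw [sub_add_cancel] at hm
  refine hm.trans (max_le (h1.trans ((div_le_one hπ0).mpr hu)) (le_of_eq norm_one))

lemma rho_q {π : C} {q : ℕ} (hπ0 : 0 < ‖π‖) (hπ1 : ‖π‖ ≤ 1) {u : C}
    (hu : ‖u‖^(q+1) ≤ ‖π‖) {n : ℕ} (hn : 1 ≤ n) :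
    ‖u^n‖^(q+1)/‖π‖ ≤ ‖u‖^(q+1)/‖π‖ :=
  (div_le_div_iff_of_pos_right hπ0).mpr (pow_hyp_le hπ1 hu hn)

lemma rho_sq {π : C} {q : ℕ} (hπ0 : 0 < ‖π‖) (hπ1 : ‖π‖ ≤ 1) (hq : 2 ≤ q) {u : C}
    (hu : ‖u‖^(q+1) ≤ ‖π‖) :
    ‖u^(q^2)‖^(q+1)/‖π‖ ≤ (‖u‖^(q+1)/‖π‖)^2 := by
  have hu0 : (0:ℝ) ≤ ‖u‖ := norm_nonneg u
  have hu1 := norm_le_one_of_hyp hπ1 hu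
  rw [norm_pow, ← pow_mul, div_pow, ← pow_mul, div_le_div_iff₀ hπ0 (by positivity)]
  have h1 : ‖u‖^(q^2*(q+1)) ≤ ‖u‖^((q+1)*2) := pow_le_pow_of_le_one hu0 hu1 (by nlinarith)
  have h0 : (0:ℝ) ≤ ‖u‖^(q^2*(q+1)) := pow_nonneg hu0 _
  calc ‖u‖^(q^2*(q+1)) * ‖π‖^2 ≤ ‖u‖^(q^2*(q+1)) * ‖π‖ := by
        nlinarith [mul_nonneg h0 hπ0.le, sq_nonneg ‖π‖, mul_le_mul_of_nonneg_left
          (mul_le_mul_of_nonneg_left hπ1 hπ0.le) h0]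
    _ ≤ ‖u‖^((q+1)*2) * ‖π‖ := mul_le_mul_of_nonneg_right h1 hπ0.le

lemma rho_sq_pow {π : C} {q : ℕ} (hπ0 : 0 < ‖π‖) (hπ1 : ‖π‖ ≤ 1) (hq : 2 ≤ q) {u : C}
    (hu : ‖u‖^(q+1) ≤ ‖π‖) (k : ℕ) :
    (‖u^(q^2)‖^(q+1)/‖π‖)^(k+1) ≤ (‖u‖^(q+1)/‖π‖)^(k+2) := by
  have h1 : (‖u^(q^2)‖^(q+1)/‖π‖)^(k+1) ≤ ((‖u‖^(q+1)/‖π‖)^2)^(k+1) :=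
    pow_le_pow_left₀ (by positivity) (rho_sq hπ0 hπ1 hq hu) _
  refine h1.trans ?_
  rw [← pow_mul]
  exact pow_le_pow_of_le_one (by positivity) ((div_le_one hπ0).mpr hu) (by omega)

lemma diff {π : C} {q : ℕ} (hπ0 : 0 < ‖π‖) (hπ1 : ‖π‖ ≤ 1) (hq : 2 ≤ q) :
    ∀ k (u : C), ‖u‖^(q+1) ≤ ‖π‖ →
      ‖A π q (k+1) u - A π q k u‖ ≤ (‖u‖^(q+1)/‖π‖)^(k+1) ∧
      ‖B π q (k+1) u - B π q k u‖ ≤ ‖u‖ * (‖u‖^(q+1)/‖π‖)^(k+1) := by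
  have hπ : (π:C) ≠ 0 := norm_pos_iff.mp hπ0
  have hq1 : 1 ≤ q := by omega
  have hq2 : 1 ≤ q^2 := by nlinarith
  intro k
  induction k with
  | zero =>
    intro u hu
    rw [pow_one, A_zero, B_zero hπ]
    have h := bound hπ0 hπ1 hq 1 u hu
    exact ⟨h.1, by rw [mul_comm]; exact h.2⟩
  | succ k ih =>
    have hΔA : ∀ u : C, ‖u‖^(q+1) ≤ ‖π‖ →
        ‖A π q (k+2) u - A π q (k+1) u‖ ≤ (‖u‖^(q+1)/‖π‖)^(k+2) := by
      intro u hu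
      have hu0 : (0:ℝ) ≤ ‖u‖ := norm_nonneg u
      have hu1 := norm_le_one_of_hyp hπ1 hu
      have huq : ‖u^q‖^(q+1) ≤ ‖π‖ := pow_hyp hπ1 hu hq1
      have huq2 : ‖u^(q^2)‖^(q+1) ≤ ‖π‖ := pow_hyp hπ1 hu hq2
      have h1 := (ih (u^(q^2)) huq2).1
      have h2 := (ih (u^q) huq).2
      rw [show A π q (k+2) u - A π q (k+1) u
          = (A π q (k+1) (u^(q^2)) - A π q k (u^(q^2)))
            + (u/π) * (B π q (k+1) (u^q) - B π q k (u^q)) from by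
            rw [A_succ hπ q (k+1) u, A_succ hπ q k u]; ring]
      refine (nmax _ _).trans (max_le (h1.trans (rho_sq_pow hπ0 hπ1 hq hu k)) ?_)
      rw [norm_mul, norm_div]
      have hrq : ‖u^q‖^(q+1)/‖π‖ ≤ ‖u‖^(q+1)/‖π‖ := rho_q hπ0 hπ1 hu hq1
      calc ‖u‖/‖π‖ * ‖B π q (k+1) (u^q) - B π q k (u^q)‖
          ≤ ‖u‖/‖π‖ * (‖u^q‖ * (‖u^q‖^(q+1)/‖π‖)^(k+1)) :=
            mul_le_mul_of_nonneg_left h2 (by positivity)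
        _ ≤ ‖u‖/‖π‖ * (‖u^q‖ * (‖u‖^(q+1)/‖π‖)^(k+1)) := by
            refine mul_le_mul_of_nonneg_left (mul_le_mul_of_nonneg_left ?_ (norm_nonneg _)) (by positivity)
            exact pow_le_pow_left₀ (by positivity) hrq _
        _ = (‖u‖^(q+1)/‖π‖) * (‖u‖^(q+1)/‖π‖)^(k+1) := by rw [norm_pow]; ring
        _ = (‖u‖^(q+1)/‖π‖)^(k+2) := by ring
    intro u hu
    have hu0 : (0:ℝ) ≤ ‖u‖ := norm_nonneg u
    have hu1 := norm_le_one_of_hyp hπ1 hu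
    have huq : ‖u^q‖^(q+1) ≤ ‖π‖ := pow_hyp hπ1 hu hq1
    have huq2 : ‖u^(q^2)‖^(q+1) ≤ ‖π‖ := pow_hyp hπ1 hu hq2
    refine ⟨hΔA u hu, ?_⟩
    rw [show B π q (k+2) u - B π q (k+1) u
        = (B π q (k+1) (u^(q^2)) - B π q k (u^(q^2)))
          + u * (A π q (k+2) (u^q) - A π q (k+1) (u^q)) from by
          rw [B_succ hπ q (k+1) u, B_succ hπ q k u]; ring]
    have e2 : ‖u^(q^2)‖ ≤ ‖u‖ := by
      rw [norm_pow]; exact pow_le_of_le_one hu0 hu1 (by omega)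
    refine (nmax _ _).trans (max_le ?_ ?_)
    · refine ((ih (u^(q^2)) huq2).2).trans ?_
      exact mul_le_mul e2 (rho_sq_pow hπ0 hπ1 hq hu k) (by positivity) hu0
    · rw [norm_mul]
      refine (mul_le_mul_of_nonneg_left (hΔA (u^q) huq) hu0).trans ?_
      refine mul_le_mul_of_nonneg_left ?_ hu0
      exact pow_le_pow_left₀ (by positivity) (rho_q hπ0 hπ1 hu hq1) _

lemma norm_sub_le_max' (a b : C) : ‖a - b‖ ≤ max ‖a‖ ‖b‖ := by
  rw [sub_eq_add_neg]
  simpa using nmax a (-b)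

lemma norm_pow_sub_pow (u u' : C) (n : ℕ) :
    ‖u^(n+1) - u'^(n+1)‖ ≤ (max ‖u‖ ‖u'‖)^n * ‖u - u'‖ := by
  induction n with
  | zero => simp
  | succ n ih =>
    rw [show u^(n+2) - u'^(n+2) = u * (u^(n+1) - u'^(n+1)) + (u - u') * u'^(n+1) from by ring]
    refine (nmax _ _).trans (max_le ?_ ?_)
    · rw [norm_mul]
      calc ‖u‖ * ‖u^(n+1) - u'^(n+1)‖ ≤ ‖u‖ * ((max ‖u‖ ‖u'‖)^n * ‖u - u'‖) :=
            mul_le_mul_of_nonneg_left ih (norm_nonneg u)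
        _ ≤ max ‖u‖ ‖u'‖ * ((max ‖u‖ ‖u'‖)^n * ‖u - u'‖) :=
            mul_le_mul_of_nonneg_right (le_max_left _ _) (by positivity)
        _ = (max ‖u‖ ‖u'‖)^(n+1) * ‖u - u'‖ := by ring
    · rw [norm_mul, norm_pow]
      calc ‖u - u'‖ * ‖u'‖^(n+1) ≤ ‖u - u'‖ * (max ‖u‖ ‖u'‖)^(n+1) :=
            mul_le_mul_of_nonneg_left
              (pow_le_pow_left₀ (norm_nonneg _) (le_max_right _ _) _) (norm_nonneg _)
        _ = _ := by ring

lemma norm_pow_sub_pow' (u u' : C) {n : ℕ} (hn : 1 ≤ n) (h1 : ‖u‖ ≤ 1) (h1' : ‖u'‖ ≤ 1) :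
    ‖u^n - u'^n‖ ≤ (max ‖u‖ ‖u'‖)^(n-1) * ‖u - u'‖ := by
  obtain ⟨m, rfl⟩ : ∃ m, n = m + 1 := ⟨n - 1, by omega⟩
  simpa using norm_pow_sub_pow u u' m

lemma lip {π : C} {q : ℕ} (hπ0 : 0 < ‖π‖) (hπ1 : ‖π‖ ≤ 1) (hq : 2 ≤ q) :
    ∀ k (u u' : C), ‖u‖^(q+1) ≤ ‖π‖ → ‖u'‖^(q+1) ≤ ‖π‖ →
      ‖A π q k u - A π q k u'‖ ≤ (max ‖u‖ ‖u'‖)^q/‖π‖ * ‖u - u'‖ ∧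
      ‖B π q k u - B π q k u'‖ ≤ ‖u - u'‖ := by
  have hπ : (π:C) ≠ 0 := norm_pos_iff.mp hπ0
  have hq1 : 1 ≤ q := by omega
  have hq2 : 1 ≤ q^2 := by nlinarith
  intro k
  induction k with
  | zero =>
    intro u u' hu hu'
    rw [A_zero, A_zero, B_zero hπ, B_zero hπ]
    constructor
    · simp only [sub_self, norm_zero]; positivity
    · exact le_rfl
  | succ k ih =>
    have hLA : ∀ u u' : C, ‖u‖^(q+1) ≤ ‖π‖ → ‖u'‖^(q+1) ≤ ‖π‖ →
        ‖A π q (k+1) u - A π q (k+1) u'‖ ≤ (max ‖u‖ ‖u'‖)^q/‖π‖ * ‖u - u'‖ := by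
      intro u u' hu hu'
      have hu0 : (0:ℝ) ≤ ‖u‖ := norm_nonneg u
      have hu1 := norm_le_one_of_hyp hπ1 hu
      have hu1' := norm_le_one_of_hyp hπ1 hu'
      set m := max ‖u‖ ‖u'‖ with hm
      have hm0 : 0 ≤ m := le_trans hu0 (le_max_left _ _)
      have hm1 : m ≤ 1 := max_le hu1 hu1'
      have huq : ‖u^q‖^(q+1) ≤ ‖π‖ := pow_hyp hπ1 hu hq1
      have huq' : ‖u'^q‖^(q+1) ≤ ‖π‖ := pow_hyp hπ1 hu' hq1
      have huq2 : ‖u^(q^2)‖^(q+1) ≤ ‖π‖ := pow_hyp hπ1 hu hq2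
      have huq2' : ‖u'^(q^2)‖^(q+1) ≤ ‖π‖ := pow_hyp hπ1 hu' hq2
      have hmaxq : max ‖u^q‖ ‖u'^q‖ ≤ m := by
        rw [norm_pow, norm_pow]
        exact max_le ((pow_le_of_le_one hu0 hu1 (by omega)).trans (le_max_left _ _))
          ((pow_le_of_le_one (norm_nonneg _) hu1' (by omega)).trans (le_max_right _ _))
      have hmaxq2 : max ‖u^(q^2)‖ ‖u'^(q^2)‖ ≤ m := by
        rw [norm_pow, norm_pow]
        exact max_le ((pow_le_of_le_one hu0 hu1 (by omega)).trans (le_max_left _ _))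
          ((pow_le_of_le_one (norm_nonneg _) hu1' (by omega)).trans (le_max_right _ _))
      rw [show A π q (k+1) u - A π q (k+1) u'
          = (A π q k (u^(q^2)) - A π q k (u'^(q^2)))
            + ((u - u') * ((1/π) * B π q k (u^q)) + u' * ((1/π) * (B π q k (u^q) - B π q k (u'^q)))) from by
            rw [A_succ hπ, A_succ hπ]; field_simp; ring]
      refine (nmax _ _).trans (max_le ?_ ((nmax _ _).trans (max_le ?_ ?_)))
      · -- A part through u^{q²}
        refine ((ih (u^(q^2)) (u'^(q^2)) huq2 huq2').1).trans ?_
        have hps : ‖u^(q^2) - u'^(q^2)‖ ≤ m^(q^2-1) * ‖u - u'‖ := by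
          refine (norm_pow_sub_pow' u u' hq2 hu1 hu1').trans ?_
          exact le_rfl
        calc (max ‖u^(q^2)‖ ‖u'^(q^2)‖)^q/‖π‖ * ‖u^(q^2) - u'^(q^2)‖
            ≤ m^q/‖π‖ * (m^(q^2-1) * ‖u - u'‖) := by
              refine mul_le_mul ?_ hps (norm_nonneg _) (by positivity)
              exact (div_le_div_iff_of_pos_right hπ0).mpr
                (pow_le_pow_left₀ (le_trans (norm_nonneg _) (le_max_left _ _)) hmaxq2 q)
          _ = m^(q + (q^2-1))/‖π‖ * ‖u - u'‖ := by rw [pow_add]; ring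
          _ ≤ m^q/‖π‖ * ‖u - u'‖ := by
              refine mul_le_mul_of_nonneg_right ?_ (norm_nonneg _)
              exact (div_le_div_iff_of_pos_right hπ0).mpr (pow_le_pow_of_le_one hm0 hm1 (by omega))
      · -- (u-u') * (1/π) * B k (u^q)
        rw [norm_mul, norm_mul, norm_div, norm_one]
        have hB := normB_le hπ0 hπ1 hq k (u^q) huq
        calc ‖u - u'‖ * (1/‖π‖ * ‖B π q k (u^q)‖) ≤ ‖u - u'‖ * (1/‖π‖ * ‖u^q‖) := by
              refine mul_le_mul_of_nonneg_left (mul_le_mul_of_nonneg_left hB (by positivity)) (norm_nonneg _)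
          _ ≤ ‖u - u'‖ * (1/‖π‖ * m^q) := by
              rw [norm_pow]
              refine mul_le_mul_of_nonneg_left (mul_le_mul_of_nonneg_left
                (pow_le_pow_left₀ hu0 (le_max_left _ _) q) (by positivity)) (norm_nonneg _)
          _ = m^q/‖π‖ * ‖u - u'‖ := by ring
      · -- u' * (1/π) * (B k (u^q) - B k (u'^q))
        rw [norm_mul, norm_mul, norm_div, norm_one]
        have hBL := (ih (u^q) (u'^q) huq huq').2
        have hps : ‖u^q - u'^q‖ ≤ m^(q-1) * ‖u - u'‖ := norm_pow_sub_pow' u u' hq1 hu1 hu1'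
        calc ‖u'‖ * (1/‖π‖ * ‖B π q k (u^q) - B π q k (u'^q)‖)
            ≤ m * (1/‖π‖ * (m^(q-1) * ‖u - u'‖)) := by
              refine mul_le_mul (le_max_right _ _) (mul_le_mul_of_nonneg_left
                (hBL.trans hps) (by positivity)) (by positivity) hm0
          _ = m^(1 + (q-1))/‖π‖ * ‖u - u'‖ := by rw [pow_add]; ring
          _ = m^q/‖π‖ * ‖u - u'‖ := by rw [show 1 + (q-1) = q from by omega]
    intro u u' hu hu'
    have hu0 : (0:ℝ) ≤ ‖u‖ := norm_nonneg u
    have hu1 := norm_le_one_of_hyp hπ1 hu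
    have hu1' := norm_le_one_of_hyp hπ1 hu'
    set m := max ‖u‖ ‖u'‖ with hm
    have hm0 : 0 ≤ m := le_trans hu0 (le_max_left _ _)
    have hm1 : m ≤ 1 := max_le hu1 hu1'
    have hme : m^(q+1) ≤ ‖π‖ := by
      rcases le_total ‖u‖ ‖u'‖ with h | h
      · rw [hm, max_eq_right h]; exact hu'
      · rw [hm, max_eq_left h]; exact hu
    have huq : ‖u^q‖^(q+1) ≤ ‖π‖ := pow_hyp hπ1 hu hq1
    have huq' : ‖u'^q‖^(q+1) ≤ ‖π‖ := pow_hyp hπ1 hu' hq1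
    have huq2 : ‖u^(q^2)‖^(q+1) ≤ ‖π‖ := pow_hyp hπ1 hu hq2
    have huq2' : ‖u'^(q^2)‖^(q+1) ≤ ‖π‖ := pow_hyp hπ1 hu' hq2
    have hmaxq : max ‖u^q‖ ‖u'^q‖ ≤ m := by
      rw [norm_pow, norm_pow]
      exact max_le ((pow_le_of_le_one hu0 hu1 (by omega)).trans (le_max_left _ _))
        ((pow_le_of_le_one (norm_nonneg _) hu1' (by omega)).trans (le_max_right _ _))
    refine ⟨hLA u u' hu hu', ?_⟩
    rw [show B π q (k+1) u - B π q (k+1) u'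
        = (B π q k (u^(q^2)) - B π q k (u'^(q^2)))
          + ((u - u') * A π q (k+1) (u^q) + u' * (A π q (k+1) (u^q) - A π q (k+1) (u'^q))) from by
          rw [B_succ hπ, B_succ hπ]; ring]
    refine (nmax _ _).trans (max_le ?_ ((nmax _ _).trans (max_le ?_ ?_)))
    · refine ((ih (u^(q^2)) (u'^(q^2)) huq2 huq2').2).trans ?_
      refine (norm_pow_sub_pow' u u' hq2 hu1 hu1').trans ?_
      calc m^(q^2-1) * ‖u - u'‖ ≤ 1 * ‖u - u'‖ :=
            mul_le_mul_of_nonneg_right (pow_le_one₀ hm0 hm1) (norm_nonneg _)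
        _ = ‖u - u'‖ := one_mul _
    · rw [norm_mul]
      calc ‖u - u'‖ * ‖A π q (k+1) (u^q)‖ ≤ ‖u - u'‖ * 1 :=
            mul_le_mul_of_nonneg_left (normA_le_one hπ0 hπ1 hq (k+1) (u^q) huq) (norm_nonneg _)
        _ = ‖u - u'‖ := mul_one _
    · rw [norm_mul]
      have hLq := hLA (u^q) (u'^q) huq huq'
      have hps : ‖u^q - u'^q‖ ≤ m^(q-1) * ‖u - u'‖ := norm_pow_sub_pow' u u' hq1 hu1 hu1'
      calc ‖u'‖ * ‖A π q (k+1) (u^q) - A π q (k+1) (u'^q)‖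
          ≤ m * ((max ‖u^q‖ ‖u'^q‖)^q/‖π‖ * ‖u^q - u'^q‖) :=
            mul_le_mul (le_max_right _ _) hLq (norm_nonneg _) hm0
        _ ≤ m * (m^q/‖π‖ * (m^(q-1) * ‖u - u'‖)) := by
            refine mul_le_mul_of_nonneg_left ?_ hm0
            refine mul_le_mul ?_ hps (norm_nonneg _) (by positivity)
            exact (div_le_div_iff_of_pos_right hπ0).mpr
              (pow_le_pow_left₀ (le_trans (norm_nonneg _) (le_max_left _ _)) hmaxq q)
        _ = m^(1+(q+(q-1)))/‖π‖ * ‖u - u'‖ := by rw [pow_add, pow_add]; ring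
        _ ≤ 1 * ‖u - u'‖ := by
            refine mul_le_mul_of_nonneg_right ?_ (norm_nonneg _)
            rw [div_le_one hπ0]
            exact (pow_le_pow_of_le_one hm0 hm1 (by omega)).trans hme
        _ = ‖u - u'‖ := one_mul _

lemma c_norm {π : C} {q : ℕ} (hπ0 : 0 < ‖π‖) (hπ1 : ‖π‖ ≤ 1) (hq : 2 ≤ q)
    (k : ℕ) (u : C) (hu : ‖u‖^(q+1) ≤ ‖π‖) :
    ‖B π q k u - u * A π q k u‖ ≤ ‖u‖^(q+2)/‖π‖ := by
  have h := bound hπ0 hπ1 hq k u hu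
  rw [show B π q k u - u * A π q k u
      = (B π q k u - u) - u * (A π q k u - 1) from by ring]
  refine (norm_sub_le_max' _ _).trans (max_le ?_ ?_)
  · refine h.2.trans (le_of_eq ?_); ring
  · rw [norm_mul]
    refine (mul_le_mul_of_nonneg_left h.1 (norm_nonneg u)).trans (le_of_eq ?_); ring

lemma c_lip {π : C} {q : ℕ} (hπ0 : 0 < ‖π‖) (hπ1 : ‖π‖ ≤ 1) (hq : 2 ≤ q)
    (k : ℕ) (u u' : C) (hu : ‖u‖^(q+1) ≤ ‖π‖) (hu' : ‖u'‖^(q+1) ≤ ‖π‖) :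
    ‖(B π q k u - u * A π q k u) - (B π q k u' - u' * A π q k u')‖
      ≤ (max ‖u‖ ‖u'‖)^(q+1)/‖π‖ * ‖u - u'‖ := by
  have hπ : (π:C) ≠ 0 := norm_pos_iff.mp hπ0
  have hq1 : 1 ≤ q := by omega
  have hq2 : 1 ≤ q^2 := by nlinarith
  have hu0 : (0:ℝ) ≤ ‖u‖ := norm_nonneg u
  have hu1 := norm_le_one_of_hyp hπ1 hu
  have hu1' := norm_le_one_of_hyp hπ1 hu'
  set m := max ‖u‖ ‖u'‖ with hm
  have hm0 : 0 ≤ m := le_trans hu0 (le_max_left _ _)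
  have hm1 : m ≤ 1 := max_le hu1 hu1'
  have huq : ‖u^q‖^(q+1) ≤ ‖π‖ := pow_hyp hπ1 hu hq1
  have huq' : ‖u'^q‖^(q+1) ≤ ‖π‖ := pow_hyp hπ1 hu' hq1
  have huq2 : ‖u^(q^2)‖^(q+1) ≤ ‖π‖ := pow_hyp hπ1 hu hq2
  have huq2' : ‖u'^(q^2)‖^(q+1) ≤ ‖π‖ := pow_hyp hπ1 hu' hq2
  have hmaxq : max ‖u^q‖ ‖u'^q‖ ≤ m := by
    rw [norm_pow, norm_pow]
    exact max_le ((pow_le_of_le_one hu0 hu1 (by omega)).trans (le_max_left _ _))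
      ((pow_le_of_le_one (norm_nonneg _) hu1' (by omega)).trans (le_max_right _ _))
  have hdivm : m^(q+1) ≤ m^(q+1)/‖π‖ := by
    rw [le_div_iff₀ hπ0]
    nlinarith [pow_nonneg hm0 (q+1)]
  cases k with
  | zero =>
    rw [A_zero, A_zero, B_zero hπ, B_zero hπ]
    simp only [mul_one, sub_self, norm_zero]
    positivity
  | succ k =>
    rw [show (B π q (k+1) u - u * A π q (k+1) u) - (B π q (k+1) u' - u' * A π q (k+1) u')
        = (B π q k (u^(q^2)) - B π q k (u'^(q^2)))
          + ((u - u') * (A π q (k+1) (u^q) - A π q (k+1) u)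
            + u' * ((A π q (k+1) (u^q) - A π q (k+1) u)
              - (A π q (k+1) (u'^q) - A π q (k+1) u'))) from by
        rw [B_succ hπ, B_succ hπ]; ring]
    have hlipA := fun (v v' : C) hv hv' => (lip hπ0 hπ1 hq (k+1) v v' hv hv').1
    refine (nmax _ _).trans (max_le ?_ ((nmax _ _).trans (max_le ?_ ?_)))
    · refine ((lip hπ0 hπ1 hq k _ _ huq2 huq2').2).trans ?_
      refine (norm_pow_sub_pow' u u' hq2 hu1 hu1').trans ?_
      refine mul_le_mul_of_nonneg_right ?_ (norm_nonneg _)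
      refine le_trans (pow_le_pow_of_le_one hm0 hm1
        (Nat.le_sub_of_add_le (by nlinarith [pow_two q]))) hdivm
    · rw [norm_mul]
      have h2 : ‖A π q (k+1) (u^q) - A π q (k+1) u‖ ≤ m^(q+1)/‖π‖ := by
        have hmax1 : max ‖u^q‖ ‖u‖ ≤ m := by
          refine max_le ?_ (le_max_left _ _)
          rw [norm_pow]
          exact (pow_le_of_le_one hu0 hu1 (by omega)).trans (le_max_left _ _)
        refine (hlipA (u^q) u huq hu).trans ?_
        have hd : ‖u^q - u‖ ≤ m := (norm_sub_le_max' _ _).trans hmax1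
        calc (max ‖u^q‖ ‖u‖)^q/‖π‖ * ‖u^q - u‖ ≤ m^q/‖π‖ * m := by
              refine mul_le_mul ?_ hd (norm_nonneg _) (by positivity)
              exact (div_le_div_iff_of_pos_right hπ0).mpr
                (pow_le_pow_left₀ (le_trans (norm_nonneg _) (le_max_left _ _)) hmax1 q)
          _ = m^(q+1)/‖π‖ := by rw [pow_succ]; ring
      calc ‖u - u'‖ * ‖A π q (k+1) (u^q) - A π q (k+1) u‖ ≤ ‖u - u'‖ * (m^(q+1)/‖π‖) :=
            mul_le_mul_of_nonneg_left h2 (norm_nonneg _)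
        _ = m^(q+1)/‖π‖ * ‖u - u'‖ := by ring
    · rw [norm_mul]
      have h3 : ‖(A π q (k+1) (u^q) - A π q (k+1) u) - (A π q (k+1) (u'^q) - A π q (k+1) u')‖
          ≤ m^q/‖π‖ * ‖u - u'‖ := by
        rw [show (A π q (k+1) (u^q) - A π q (k+1) u) - (A π q (k+1) (u'^q) - A π q (k+1) u')
            = (A π q (k+1) (u^q) - A π q (k+1) (u'^q)) - (A π q (k+1) u - A π q (k+1) u')
            from by ring]
        refine (norm_sub_le_max' _ _).trans (max_le ?_ ?_)
        · refine (hlipA (u^q) (u'^q) huq huq').trans ?_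
          have hps : ‖u^q - u'^q‖ ≤ m^(q-1) * ‖u - u'‖ := norm_pow_sub_pow' u u' hq1 hu1 hu1'
          calc (max ‖u^q‖ ‖u'^q‖)^q/‖π‖ * ‖u^q - u'^q‖ ≤ m^q/‖π‖ * (m^(q-1) * ‖u - u'‖) := by
                refine mul_le_mul ?_ hps (norm_nonneg _) (by positivity)
                exact (div_le_div_iff_of_pos_right hπ0).mpr
                  (pow_le_pow_left₀ (le_trans (norm_nonneg _) (le_max_left _ _)) hmaxq q)
            _ = m^(q+(q-1))/‖π‖ * ‖u - u'‖ := by rw [pow_add]; ring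
            _ ≤ m^q/‖π‖ * ‖u - u'‖ := by
                refine mul_le_mul_of_nonneg_right ?_ (norm_nonneg _)
                exact (div_le_div_iff_of_pos_right hπ0).mpr (pow_le_pow_of_le_one hm0 hm1 (by omega))
        · exact hlipA u u' hu hu'
      calc ‖u'‖ * ‖(A π q (k+1) (u^q) - A π q (k+1) u) - (A π q (k+1) (u'^q) - A π q (k+1) u')‖
          ≤ m * (m^q/‖π‖ * ‖u - u'‖) := mul_le_mul (le_max_right _ _) h3 (norm_nonneg _) hm0
        _ = m^(q+1)/‖π‖ * ‖u - u'‖ := by rw [pow_succ]; ring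

lemma tendsto_A {π : C} {q : ℕ} [CompleteSpace C] (hπ0 : 0 < ‖π‖) (hπ1 : ‖π‖ ≤ 1)
    (hq : 2 ≤ q) (u : C) (hu : ‖u‖^(q+1) < ‖π‖) :
    ∃ L, Tendsto (fun k => A π q k u) atTop (𝓝 L) := by
  have hr1 : ‖u‖^(q+1)/‖π‖ < 1 := (div_lt_one hπ0).mpr hu
  have hcs : CauchySeq (fun k => A π q k u) := by
    refine cauchySeq_of_le_geometric (‖u‖^(q+1)/‖π‖) 1 hr1 (fun n => ?_)
    rw [dist_eq_norm, norm_sub_rev]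
    refine ((diff hπ0 hπ1 hq n u hu.le).1).trans ?_
    rw [one_mul, pow_succ]
    nlinarith [pow_nonneg (show (0:ℝ) ≤ ‖u‖^(q+1)/‖π‖ from by positivity) n,
      (show (0:ℝ) ≤ ‖u‖^(q+1)/‖π‖ from by positivity)]
  exact cauchySeq_tendsto_of_complete hcs

lemma tendsto_B {π : C} {q : ℕ} [CompleteSpace C] (hπ0 : 0 < ‖π‖) (hπ1 : ‖π‖ ≤ 1)
    (hq : 2 ≤ q) (u : C) (hu : ‖u‖^(q+1) < ‖π‖) :
    ∃ L, Tendsto (fun k => B π q k u) atTop (𝓝 L) := by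
  have hr1 : ‖u‖^(q+1)/‖π‖ < 1 := (div_lt_one hπ0).mpr hu
  have hcs : CauchySeq (fun k => B π q k u) := by
    refine cauchySeq_of_le_geometric (‖u‖^(q+1)/‖π‖) ‖u‖ hr1 (fun n => ?_)
    rw [dist_eq_norm, norm_sub_rev]
    refine ((diff hπ0 hπ1 hq n u hu.le).2).trans ?_
    rw [pow_succ]
    nlinarith [pow_nonneg (show (0:ℝ) ≤ ‖u‖^(q+1)/‖π‖ from by positivity) n,
      (show (0:ℝ) ≤ ‖u‖^(q+1)/‖π‖ from by positivity), norm_nonneg u,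
      mul_nonneg (norm_nonneg u) (pow_nonneg (show (0:ℝ) ≤ ‖u‖^(q+1)/‖π‖ from by positivity) n)]
  exact cauchySeq_tendsto_of_complete hcs

lemma norm_eq_one_of_close {L : C} (h : ‖L - 1‖ < 1) : ‖L‖ = 1 := by
  have hle : ‖L‖ ≤ 1 := by
    have := nmax (L - 1) 1
    rw [sub_add_cancel] at this
    refine this.trans (max_le h.le (le_of_eq norm_one))
  have hge : (1:ℝ) ≤ ‖L‖ := by
    by_contra hlt
    push_neg at hlt
    have h1 : ‖L - (L - 1)‖ ≤ max ‖L‖ ‖L - 1‖ := norm_sub_le_max' _ _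
    simp only [sub_sub_cancel, norm_one] at h1
    have := max_lt hlt h
    linarith
  linarith

end GHAux


theorem gross_hopkins_injective_small_disk {p : ℕ} [Fact p.Prime] {C : Type*} [NormedField C] [IsUltrametricDist C]
    [CompleteSpace C] [IsAlgClosed C] [Algebra ℚ_[p] C]
    (hiso : ∀ x : ℚ_[p], ‖algebraMap ℚ_[p] C x‖ = ‖x‖)
    (K : IntermediateField ℚ_[p] C) (hKfin : FiniteDimensional ℚ_[p] K)
    (q : ℕ) (hq : ∃ r : ℕ, 0 < r ∧ q = p ^ r)
    (π : C) (hπK : π ∈ K) (hπ0 : 0 < ‖π‖) (hπ1 : ‖π‖ < 1)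
    (hπunif : ∀ x ∈ K, ‖x‖ < 1 → ‖x‖ ≤ ‖π‖)
    (hres : ∃ S : Finset C, S.card = q ∧ (∀ s ∈ S, s ∈ K ∧ ‖s‖ ≤ 1) ∧
      (∀ x ∈ K, ‖x‖ ≤ 1 → ∃ s ∈ S, ‖x - s‖ < 1) ∧
      (∀ s ∈ S, ∀ t ∈ S, s ≠ t → ‖s - t‖ = 1)) :
    ∀ u u' : C, ‖u‖ < ‖π‖ ^ ((1:ℝ)/(q+1)) → ‖u'‖ < ‖π‖ ^ ((1:ℝ)/(q+1)) →
      ghphi0 π q u * ghphi1 π q u' = ghphi1 π q u * ghphi0 π q u' → u = u' := by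
  have hq2 : 2 ≤ q := by
    obtain ⟨r, hr0, rfl⟩ := hq
    have h2 := (Fact.out : p.Prime).two_le
    calc 2 = 2^1 := (pow_one 2).symm
      _ ≤ p^1 := Nat.pow_le_pow_left h2 1
      _ ≤ p^r := Nat.pow_le_pow_right (by omega) hr0
  have hπ1le : ‖π‖ ≤ 1 := hπ1.le
  have hconv : ∀ v : C, ‖v‖ < ‖π‖ ^ ((1:ℝ)/(q+1)) → ‖v‖^(q+1) < ‖π‖ := by
    intro v hv
    have h0 : (0:ℝ) ≤ ‖v‖ := norm_nonneg v
    have hcast : (‖v‖:ℝ)^(q+1) = ‖v‖ ^ (((q:ℕ)+1 : ℕ) : ℝ) := (Real.rpow_natCast _ _).symm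
    rw [hcast]
    calc ‖v‖ ^ (((q:ℕ)+1 : ℕ) : ℝ) < (‖π‖ ^ ((1:ℝ)/(q+1))) ^ (((q:ℕ)+1 : ℕ) : ℝ) :=
          Real.rpow_lt_rpow h0 hv (by positivity)
      _ = ‖π‖ := by
          rw [← Real.rpow_mul hπ0.le]
          push_cast
          rw [one_div, inv_mul_cancel₀ (by positivity : ((q:ℝ)+1) ≠ 0), Real.rpow_one]
  intro u u' hru hru' heq
  have hu : ‖u‖^(q+1) < ‖π‖ := hconv u hru
  have hu' : ‖u'‖^(q+1) < ‖π‖ := hconv u' hru'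
  obtain ⟨L0, hL0⟩ := GHAux.tendsto_A hπ0 hπ1le hq2 u hu
  obtain ⟨L0', hL0'⟩ := GHAux.tendsto_A hπ0 hπ1le hq2 u' hu'
  obtain ⟨L1, hL1⟩ := GHAux.tendsto_B hπ0 hπ1le hq2 u hu
  obtain ⟨L1', hL1'⟩ := GHAux.tendsto_B hπ0 hπ1le hq2 u' hu'
  have e0 : ghphi0 π q u = L0 :=
    Filter.Tendsto.limUnder_eq (by simpa only [GHAux.A] using hL0)
  have e0' : ghphi0 π q u' = L0' :=
    Filter.Tendsto.limUnder_eq (by simpa only [GHAux.A] using hL0')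
  have e1 : ghphi1 π q u = L1 :=
    Filter.Tendsto.limUnder_eq (by simpa only [GHAux.B] using hL1)
  have e1' : ghphi1 π q u' = L1' :=
    Filter.Tendsto.limUnder_eq (by simpa only [GHAux.B] using hL1')
  rw [e0, e0', e1, e1'] at heq
  -- limit bounds
  have hA1 : ‖L0 - 1‖ ≤ ‖u‖^(q+1)/‖π‖ :=
    le_of_tendsto (hL0.sub tendsto_const_nhds).norm
      (Filter.Eventually.of_forall fun k => (GHAux.bound hπ0 hπ1le hq2 k u hu.le).1)
  have hA1' : ‖L0' - 1‖ ≤ ‖u'‖^(q+1)/‖π‖ :=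
    le_of_tendsto (hL0'.sub tendsto_const_nhds).norm
      (Filter.Eventually.of_forall fun k => (GHAux.bound hπ0 hπ1le hq2 k u' hu'.le).1)
  have hL0n : ‖L0‖ = 1 :=
    GHAux.norm_eq_one_of_close (lt_of_le_of_lt hA1 ((div_lt_one hπ0).mpr hu))
  have hL0n' : ‖L0'‖ = 1 :=
    GHAux.norm_eq_one_of_close (lt_of_le_of_lt hA1' ((div_lt_one hπ0).mpr hu'))
  set m := max ‖u‖ ‖u'‖ with hm
  have hm0 : 0 ≤ m := le_trans (norm_nonneg u) (le_max_left _ _)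
  have hρm1 : m^(q+1)/‖π‖ < 1 := by
    rw [div_lt_one hπ0]
    rcases le_total ‖u‖ ‖u'‖ with h | h
    · rw [hm, max_eq_right h]; exact hu'
    · rw [hm, max_eq_left h]; exact hu
  have hlip : ‖L0 - L0'‖ ≤ m^q/‖π‖ * ‖u - u'‖ :=
    le_of_tendsto (hL0.sub hL0').norm
      (Filter.Eventually.of_forall fun k => (GHAux.lip hπ0 hπ1le hq2 k u u' hu.le hu'.le).1)
  have hcdiff : ‖(L1 - u*L0) - (L1' - u'*L0')‖ ≤ m^(q+1)/‖π‖ * ‖u - u'‖ :=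
    le_of_tendsto (((hL1.sub (hL0.const_mul u)).sub (hL1'.sub (hL0'.const_mul u'))).norm)
      (Filter.Eventually.of_forall fun k => GHAux.c_lip hπ0 hπ1le hq2 k u u' hu.le hu'.le)
  have hcn : ‖L1 - u*L0‖ ≤ ‖u‖^(q+2)/‖π‖ :=
    le_of_tendsto ((hL1.sub (hL0.const_mul u)).norm)
      (Filter.Eventually.of_forall fun k => GHAux.c_norm hπ0 hπ1le hq2 k u hu.le)
  -- the key algebraic identity
  have key : (u - u') * (L0 * L0')
      = L0 * ((L1' - u'*L0') - (L1 - u*L0)) + (L1 - u*L0) * (L0 - L0') := by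
    linear_combination -heq
  have hnorm_eq : ‖u - u'‖ = ‖(u - u') * (L0 * L0')‖ := by
    rw [norm_mul, norm_mul, hL0n, hL0n', mul_one, mul_one]
  have hstep : ‖(u - u') * (L0 * L0')‖ ≤ m^(q+1)/‖π‖ * ‖u - u'‖ := by
    rw [key]
    refine (GHAux.nmax _ _).trans (max_le ?_ ?_)
    · rw [norm_mul, hL0n, one_mul, norm_sub_rev]
      exact hcdiff
    · rw [norm_mul]
      calc ‖L1 - u*L0‖ * ‖L0 - L0'‖ ≤ (‖u‖^(q+2)/‖π‖) * (m^q/‖π‖ * ‖u - u'‖) :=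
            mul_le_mul hcn hlip (norm_nonneg _) (by positivity)
        _ ≤ (m^(q+2)/‖π‖) * (m^q/‖π‖ * ‖u - u'‖) := by
            refine mul_le_mul_of_nonneg_right ?_ (by positivity)
            exact (div_le_div_iff_of_pos_right hπ0).mpr (pow_le_pow_left₀ (norm_nonneg u) (le_max_left _ _) _)
        _ = (m^(q+2) * m^q) / (‖π‖*‖π‖) * ‖u - u'‖ := by ring
        _ = (m^(q+1) * m^(q+1)) / (‖π‖*‖π‖) * ‖u - u'‖ := by
            rw [← pow_add, ← pow_add, show q+2+q = q+1+(q+1) from by omega]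
        _ = (m^(q+1)/‖π‖) * ((m^(q+1)/‖π‖) * ‖u - u'‖) := by ring
        _ ≤ (m^(q+1)/‖π‖) * (1 * ‖u - u'‖) := by
            refine mul_le_mul_of_nonneg_left (mul_le_mul_of_nonneg_right hρm1.le (norm_nonneg _))
              (by positivity)
        _ = m^(q+1)/‖π‖ * ‖u - u'‖ := by rw [one_mul]
  rw [← hnorm_eq] at hstep
  have hΔ0 : (0:ℝ) ≤ ‖u - u'‖ := norm_nonneg _
  have hρm0 : (0:ℝ) ≤ m^(q+1)/‖π‖ := by positivity
  have : ‖u - u'‖ = 0 := by nlinarith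
  have h2 : u - u' = 0 := norm_eq_zero.mp this
  exact sub_eq_zero.mp h2
end

section
/- Every monomial X^a·Y^b occurring with nonzero coefficient in g(X,Y) = ∏_{i=1}^{q-1} F(X, ζ^i·Y) has both exponents divisible by q−1; that is, g(X,Y) belongs to R⟦X^{q-1}, Y^{q-1}⟧. -/
open Filter


/-- Total degree of a multi-index. -/
def mdeg {sig : Type*} (d : sig →₀ ℕ) : ℕ := d.sum fun _ e => e

/-- Substitution of a multivariable power series `G` with vanishing constant
term into a one-variable power series `f`, i.e. `f(G)`.  (For `G` with zero
constant term only finitely many terms contribute to each coefficient, and the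
formula below computes the honest substitution.) -/
noncomputable def substPS {C : Type*} [CommRing C] {sig : Type*}
    (G : MvPowerSeries sig C) (f : PowerSeries C) : MvPowerSeries sig C :=
  fun d => ∑ n ∈ Finset.range (mdeg d + 1),
    PowerSeries.coeff n f * MvPowerSeries.coeff d (G ^ n)

/-- Substitution of a one-variable power series into a one-variable power
series: `f(G)`. -/
noncomputable def substPS1 {C : Type*} [CommRing C]
    (G f : PowerSeries C) : PowerSeries C :=
  substPS (G : MvPowerSeries Unit C) f

/-- Substitution of the pair `(a, b)` (each with vanishing constant term) into
a two-variable power series `F`, i.e. `F(a, b)`. -/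
noncomputable def subst2 {C : Type*} [CommRing C] {tau : Type*}
    (a b : MvPowerSeries tau C) (F : MvPowerSeries (Fin 2) C) : MvPowerSeries tau C :=
  fun e => ∑ ij ∈ Finset.range (mdeg e + 1) ×ˢ Finset.range (mdeg e + 1),
    MvPowerSeries.coeff (Finsupp.single 0 ij.1 + Finsupp.single 1 ij.2) F *
      MvPowerSeries.coeff e (a ^ ij.1 * b ^ ij.2)

lemma fin2_rep (e : Fin 2 →₀ ℕ) :
    e = Finsupp.single 0 (e 0) + Finsupp.single 1 (e 1) := by
  ext s
  fin_cases s <;> simp [Finsupp.single_apply]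

lemma mdeg_fin2 (e : Fin 2 →₀ ℕ) : mdeg e = e 0 + e 1 := by
  conv_lhs => rw [fin2_rep e]
  unfold mdeg
  rw [Finsupp.sum_add_index (by simp) (by simp)]
  rw [Finsupp.sum_single_index rfl, Finsupp.sum_single_index rfl]

/-- Key coefficient computation. -/
lemma coeff_subst2 {R : Type*} [CommRing R] (a b : R) (F : MvPowerSeries (Fin 2) R)
    (e : Fin 2 →₀ ℕ) :
    MvPowerSeries.coeff (R := R) e
        (subst2 (MvPowerSeries.C (σ := Fin 2) (R := R) a * MvPowerSeries.X 0)
          (MvPowerSeries.C (σ := Fin 2) (R := R) b * MvPowerSeries.X 1) F)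
      = a ^ (e 0) * b ^ (e 1) * MvPowerSeries.coeff (R := R) e F := by
  rw [MvPowerSeries.coeff_apply]
  unfold subst2
  have hpow : ∀ i j : ℕ,
      (MvPowerSeries.C (σ := Fin 2) (R := R) a * MvPowerSeries.X 0) ^ i *
        (MvPowerSeries.C (σ := Fin 2) (R := R) b * MvPowerSeries.X 1) ^ j
      = MvPowerSeries.C (σ := Fin 2) (R := R) (a ^ i * b ^ j) *
          MvPowerSeries.monomial (R := R) (Finsupp.single 0 i + Finsupp.single 1 j) 1 := by
    intro i j
    rw [mul_pow, mul_pow, ← map_pow, ← map_pow, MvPowerSeries.X_pow_eq,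
      MvPowerSeries.X_pow_eq, mul_mul_mul_comm, MvPowerSeries.monomial_mul_monomial,
      ← map_mul, mul_one]
  rw [Finset.sum_eq_single ((e 0), (e 1))]
  · rw [hpow, MvPowerSeries.coeff_C_mul, MvPowerSeries.coeff_monomial,
      if_pos (fin2_rep e)]
    rw [← fin2_rep e]
    ring
  · rintro ⟨i, j⟩ _ hne
    rw [hpow, MvPowerSeries.coeff_C_mul, MvPowerSeries.coeff_monomial, if_neg, mul_zero,
      mul_zero]
    intro h
    apply hne
    have h0 := congrArg (fun f => f 0) h
    have h1 := congrArg (fun f => f 1) h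
    simp [Finsupp.single_apply] at h0 h1
    simp [h0, h1]
  · intro h
    exfalso
    apply h
    rw [Finset.mem_product, Finset.mem_range, Finset.mem_range, mdeg_fin2]
    omega

/-- Coefficient-rescaling monoid homomorphism. -/
noncomputable def scaleM {R : Type*} [CommRing R] (c : R) (w : Fin 2 → ℕ) :
    MvPowerSeries (Fin 2) R →* MvPowerSeries (Fin 2) R where
  toFun f := fun d => c ^ (∑ s, w s * d s) * f d
  map_one' := by
    funext d
    show c ^ _ * MvPowerSeries.coeff (R := R) d 1 = MvPowerSeries.coeff (R := R) d 1
    rw [MvPowerSeries.coeff_one]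
    by_cases h : d = 0
    · subst h; simp
    · rw [if_neg h, mul_zero]
  map_mul' := by
    intro f g
    funext d
    have h1 : ∀ (u v : MvPowerSeries (Fin 2) R) (e : Fin 2 →₀ ℕ),
        (u * v) e = ∑ p ∈ Finset.HasAntidiagonal.antidiagonal e, u p.1 * v p.2 := by
      intro u v e
      exact MvPowerSeries.coeff_mul (φ := u) (ψ := v) (n := e)
    show c ^ (∑ s, w s * d s) * (f * g) d = _
    show _ = ((show MvPowerSeries (Fin 2) R from fun d => c ^ (∑ s, w s * d s) * f d) *
      (show MvPowerSeries (Fin 2) R from fun d => c ^ (∑ s, w s * d s) * g d)) d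
    rw [h1, h1, Finset.mul_sum]
    apply Finset.sum_congr rfl
    rintro ⟨u, v⟩ huv
    rw [Finset.HasAntidiagonal.mem_antidiagonal] at huv
    have hW : (∑ s, w s * d s) = (∑ s, w s * u s) + (∑ s, w s * v s) := by
      rw [← Finset.sum_add_distrib]
      apply Finset.sum_congr rfl
      intro s _
      rw [← huv]
      simp [mul_add]
    show _ = (c ^ (∑ s, w s * u s) * f u) * (c ^ (∑ s, w s * v s) * g v)
    rw [hW, pow_add]
    ring

lemma scaleM_coeff {R : Type*} [CommRing R] (c : R) (w : Fin 2 → ℕ)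
    (f : MvPowerSeries (Fin 2) R) (d : Fin 2 →₀ ℕ) :
    MvPowerSeries.coeff (R := R) d (scaleM c w f) = c ^ (∑ s, w s * d s) * MvPowerSeries.coeff (R := R) d f :=
  rfl

theorem lubin_product_exponents (p q : ℕ) (hp : p.Prime) (hq : ∃ r : ℕ, 0 < r ∧ q = p ^ r)
    (R : Type*) [CommRing R] [IsDomain R]
    (ζ : R) (hζ : orderOf ζ = q - 1)
    (F : MvPowerSeries (Fin 2) R)
    (hX : subst2 (MvPowerSeries.X 0 : MvPowerSeries (Fin 2) R) 0 F = MvPowerSeries.X 0)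
    (hY : subst2 (0 : MvPowerSeries (Fin 2) R) (MvPowerSeries.X 1) F = MvPowerSeries.X 1)
    (hcomm : subst2 (MvPowerSeries.X 1 : MvPowerSeries (Fin 2) R) (MvPowerSeries.X 0) F = F)
    (hassoc :
      subst2 (subst2 (MvPowerSeries.X 0 : MvPowerSeries (Fin 3) R) (MvPowerSeries.X 1) F)
          (MvPowerSeries.X 2) F =
        subst2 (MvPowerSeries.X 0 : MvPowerSeries (Fin 3) R)
          (subst2 (MvPowerSeries.X 1 : MvPowerSeries (Fin 3) R) (MvPowerSeries.X 2) F) F)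
    (hζend : subst2 (MvPowerSeries.C (σ := Fin 2) (R := R) ζ * MvPowerSeries.X 0)
        (MvPowerSeries.C (σ := Fin 2) (R := R) ζ * MvPowerSeries.X 1) F = MvPowerSeries.C (σ := Fin 2) (R := R) ζ * F) :
    ∀ d : Fin 2 →₀ ℕ,
      MvPowerSeries.coeff (R := R) d
        (∏ i ∈ Finset.Icc 1 (q-1),
          subst2 (MvPowerSeries.X 0 : MvPowerSeries (Fin 2) R)
            (MvPowerSeries.C (σ := Fin 2) (R := R) (ζ^i) * MvPowerSeries.X 1) F) ≠ 0 →
      (q-1) ∣ d 0 ∧ (q-1) ∣ d 1 := by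
  intro d hd
  obtain ⟨r, hr, rfl⟩ := hq
  set n := p ^ r - 1 with hn
  clear_value n
  have hq2 : 2 ≤ p ^ r := by
    calc 2 ≤ p := hp.two_le
    _ = p ^ 1 := (pow_one p).symm
    _ ≤ p ^ r := Nat.pow_le_pow_right hp.one_lt.le hr
  have hn1 : 1 ≤ n := by omega
  have hζn : ζ ^ n = 1 := hζ ▸ pow_orderOf_eq_one ζ
  set G : ℕ → MvPowerSeries (Fin 2) R := fun k =>
    subst2 (MvPowerSeries.X 0) (MvPowerSeries.C (σ := Fin 2) (R := R) (ζ^k) * MvPowerSeries.X 1) F with hG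
  have hGcoeff : ∀ k (e : Fin 2 →₀ ℕ),
      MvPowerSeries.coeff (R := R) e (G k) = ζ ^ (k * e 1) * MvPowerSeries.coeff (R := R) e F := by
    intro k e
    have h := coeff_subst2 (1:R) (ζ^k) F e
    rw [map_one, one_mul, one_pow, one_mul, ← pow_mul] at h
    exact h
  set g : MvPowerSeries (Fin 2) R := ∏ i ∈ Finset.Icc 1 n, G i with hg
  -- generic shift computation
  have hIcc : ∀ f : ℕ → MvPowerSeries (Fin 2) R,
      ∏ i ∈ Finset.Icc 1 n, f i = ∏ i ∈ Finset.range n, f (1+i) := by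
    intro f
    rw [← Finset.Ico_add_one_right_eq_Icc, Finset.prod_Ico_eq_prod_range]
    simp
  have hre : ∏ i ∈ Finset.Icc 1 n, G (i+1) = g := by
    rw [hg, hIcc, hIcc]
    obtain ⟨m, hm⟩ : ∃ m, n = m + 1 := ⟨n-1, by omega⟩
    subst hm
    rw [Finset.prod_range_succ, Finset.prod_range_succ']
    have htop : G (1 + m + 1) = G (1 + 0) := by
      apply MvPowerSeries.ext
      intro e
      rw [hGcoeff, hGcoeff]
      congr 1
      rw [pow_mul, pow_mul]
      congr 1
      have h2 : 1 + m + 1 = (m + 1) + 1 := by omega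
      rw [h2, pow_succ, hζn, one_mul]
      norm_num
    rw [htop]
    rfl
  -- Step B : divisibility of d 1
  have hS1G : ∀ k, scaleM ζ ![0,1] (G k) = G (k+1) := by
    intro k
    apply MvPowerSeries.ext
    intro e
    rw [scaleM_coeff, hGcoeff, hGcoeff]
    have hw : (∑ s, (![0,1] : Fin 2 → ℕ) s * e s) = e 1 := by
      simp [Fin.sum_univ_two]
    rw [hw, ← mul_assoc, ← pow_add]
    congr 2
    ring
  have hSg : scaleM ζ ![0,1] g = g := by
    rw [hg, map_prod]
    simp only [hS1G]
    rw [← hg, hre]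
  have hb : ζ ^ (d 1) * MvPowerSeries.coeff (R := R) d g = MvPowerSeries.coeff (R := R) d g := by
    conv_rhs => rw [← hSg]
    rw [scaleM_coeff]
    congr 2
    simp [Fin.sum_univ_two]
  have hpow1 : ζ ^ (d 1) = 1 := by
    have h0 : (ζ ^ (d 1) - 1) * MvPowerSeries.coeff (R := R) d g = 0 := by
      rw [sub_mul, one_mul, hb, sub_self]
    rcases mul_eq_zero.mp h0 with h | h
    · linear_combination h
    · exact absurd h hd
  have hdvd1 : n ∣ d 1 := hζ ▸ orderOf_dvd_of_pow_eq_one hpow1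
  -- Step C : divisibility of d 0 + d 1
  have hζF : ∀ e : Fin 2 →₀ ℕ,
      ζ ^ (e 0 + e 1) * MvPowerSeries.coeff (R := R) e F = ζ * MvPowerSeries.coeff (R := R) e F := by
    intro e
    have h := congrArg (MvPowerSeries.coeff (R := R) e) hζend
    rw [coeff_subst2, MvPowerSeries.coeff_C_mul] at h
    rw [pow_add, mul_assoc]
    rw [mul_assoc] at h
    exact h
  have hTG : ∀ k, scaleM ζ ![1,1] (G k) =
      MvPowerSeries.C (σ := Fin 2) (R := R) ζ * G k := by
    intro k
    apply MvPowerSeries.ext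
    intro e
    rw [scaleM_coeff, MvPowerSeries.coeff_C_mul, hGcoeff]
    have hw : (∑ s, (![1,1] : Fin 2 → ℕ) s * e s) = e 0 + e 1 := by
      simp [Fin.sum_univ_two]
    rw [hw, mul_left_comm, hζF e, mul_left_comm]
  have hTg : scaleM ζ ![1,1] g = g := by
    rw [hg, map_prod]
    simp only [hTG]
    rw [Finset.prod_mul_distrib, Finset.prod_const, Nat.card_Icc, ← map_pow]
    have : n + 1 - 1 = n := by omega
    rw [this, hζn, map_one, one_mul, ← hg]
  have hb2 : ζ ^ (d 0 + d 1) * MvPowerSeries.coeff (R := R) d g = MvPowerSeries.coeff (R := R) d g := by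
    conv_rhs => rw [← hTg]
    rw [scaleM_coeff]
    congr 2
    simp [Fin.sum_univ_two]
  have hpow2 : ζ ^ (d 0 + d 1) = 1 := by
    have h0 : (ζ ^ (d 0 + d 1) - 1) * MvPowerSeries.coeff (R := R) d g = 0 := by
      rw [sub_mul, one_mul, hb2, sub_self]
    rcases mul_eq_zero.mp h0 with h | h
    · linear_combination h
    · exact absurd h hd
  have hdvd01 : n ∣ d 0 + d 1 := hζ ▸ orderOf_dvd_of_pow_eq_one hpow2
  exact ⟨(Nat.dvd_add_iff_left hdvd1).mpr hdvd01, hdvd1⟩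
end

section
/- Let s ≥ 1 be an odd integer, let γ be a real number with |π|^{1/(q^s+q^{s-1})} < γ < |π|^{1/(q^{s+2}+q^{s+1})}, and let u_0 ∈ ℂ_p with |u_0| = γ. Then for every u ∈ ℂ_p with |u − u_0| < (|π|·γ^{-2})^{1/(q-1)} one has φ_0(u) ≠ 0, φ_0(u_0) ≠ 0, and |φ_1(u)/φ_0(u) − φ_1(u_0)/φ_0(u_0)| = |π|^{s+1}·γ^{-2(1+q+⋯+q^s)}·|u − u_0|. -/
open Filter


section Alg
variable {C : Type*} [Field C] (π : C) (q : ℕ)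

lemma ghm_zero (u : C) : ghm π q 0 u = 1 := rfl
lemma ghm_one (u : C) : ghm π q 1 u = u / π := rfl
lemma ghm_two (k : ℕ) (u : C) :
    ghm π q (k+2) u = (u / π) * ghm π q (k+1) (u ^ q) + (1 / π) * ghm π q k (u ^ (q^2)) := rfl

/-- antisymmetric pairing -/
noncomputable def Xf (n : ℕ) (v w : C) : C :=
  ghm π q (n+1) v * ghm π q n w - ghm π q n v * ghm π q (n+1) w

/-- Wronskian deviation -/
noncomputable def Ef (n : ℕ) (v w : C) : C :=
  ghm π q (n+2) v * ghm π q n (w^q) - ghm π q (n+1) v * ghm π q (n+1) (w^q)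
    - (-1)^n * (π⁻¹)^(n+1)

lemma Xf_diag (n : ℕ) (v : C) : Xf π q n v v = 0 := by simp [Xf, mul_comm]

lemma pow_q_sq (v : C) : (v ^ q) ^ q = v ^ q ^ 2 := by
  rw [← pow_mul, ← pow_two]

lemma Ef_zero_eq (v w : C) : Ef π q 0 v w = v * (v^q - w^q) * (π⁻¹)^2 := by
  simp only [Ef, ghm]
  ring

lemma Xf_zero_eq (v w : C) : Xf π q 0 v w = (v - w) * π⁻¹ := by
  simp only [Xf, ghm]
  ring

lemma Xf_one_eq (v w : C) :
    Xf π q 1 v w = v*w*(v^q - w^q)*(π⁻¹)^3 - (v-w)*(π⁻¹)^2 := by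
  show ghm π q (0+2) v * ghm π q 1 w - ghm π q 1 v * ghm π q (0+2) w = _
  simp only [ghm]
  ring

lemma Ef_rec (n : ℕ) (v w : C) :
    Ef π q (n+1) v w = (v * π⁻¹) * Xf π q (n+1) (v^q) (w^q) - π⁻¹ * Ef π q n (w^q) (v^q) := by
  simp only [Ef, Xf, ghm_two, pow_q_sq, pow_succ]
  ring

lemma Xf_rec (n : ℕ) (v w : C) :
    Xf π q (n+2) v w = (v*w*(π⁻¹)^2) * Xf π q (n+1) (v^q) (w^q)
      + (π⁻¹)^2 * Xf π q n (v^(q^2)) (w^(q^2))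
      + (v*(π⁻¹)^2) * Ef π q n (v^q) (w^q) - (w*(π⁻¹)^2) * Ef π q n (w^q) (v^q)
      + (v-w) * (-1)^n * (π⁻¹)^(n+3) := by
  simp only [Ef, Xf, ghm_two, pow_q_sq, pow_succ]
  ring

lemma Ef_diag (n : ℕ) (v : C) : Ef π q n v v = 0 := by
  induction n generalizing v with
  | zero => simp [Ef_zero_eq]
  | succ n ih => rw [Ef_rec, Xf_diag, ih]; ring

end Alg


section Ultra
variable {C : Type*} [NormedField C] [IsUltrametricDist C]

lemma unorm_add_eq_left {x y : C} (h : ‖y‖ < ‖x‖) : ‖x + y‖ = ‖x‖ := by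
  rw [IsUltrametricDist.norm_add_eq_max_of_norm_ne_norm (by exact (ne_of_lt h).symm)]
  exact max_eq_left h.le

lemma unorm_sub_eq_left {x y : C} (h : ‖y‖ < ‖x‖) : ‖x - y‖ = ‖x‖ := by
  rw [sub_eq_add_neg]; exact unorm_add_eq_left (by simpa using h)

lemma unorm_eq_of_sub_lt {v w : C} (h : ‖v - w‖ < ‖v‖) : ‖w‖ = ‖v‖ := by
  have : w = v - (v - w) := by ring
  rw [this, unorm_sub_eq_left h]

lemma unorm_add_le_max (x y : C) : ‖x + y‖ ≤ max ‖x‖ ‖y‖ :=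
  IsUltrametricDist.norm_add_le_max x y

lemma unorm_sub_le_max (x y : C) : ‖x - y‖ ≤ max ‖x‖ ‖y‖ := by
  rw [sub_eq_add_neg]; simpa using unorm_add_le_max x (-y)

lemma pow_diff_bound {q : ℕ} (hq2 : 2 ≤ q) {b : ℝ}
    (hch : ∀ i, 0 < i → i < q → ‖((q.choose i : ℕ) : C)‖ ≤ b)
    (v w : C) (h : ‖w - v‖ ≤ ‖v‖) :
    ‖w^q - v^q‖ ≤ ‖w - v‖ * max (‖w - v‖^(q-1)) (b * ‖v‖^(q-1)) := by
  have hq1 : q - 1 + 1 = q := by omega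
  set t := w - v with ht
  have hw : w = v + t := by rw [ht]; ring
  have hexp : (v + t)^q - v^q = ∑ k ∈ Finset.range q, v^k * t^(q-k) * (q.choose k : C) := by
    rw [add_pow, Finset.sum_range_succ]; simp
  rw [hw, hexp]
  apply IsUltrametricDist.norm_sum_le_of_forall_le_of_nonneg
  · positivity
  · intro k hk
    have hkq : k < q := Finset.mem_range.mp hk
    rw [norm_mul, norm_mul, norm_pow, norm_pow]
    rcases Nat.eq_zero_or_pos k with hk0 | hk0
    · subst hk0
      simp only [pow_zero, one_mul]
      have : ((q.choose 0 : ℕ) : C) = 1 := by simp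
      rw [this, norm_one, mul_one]
      calc ‖t‖^(q-0) = ‖t‖ * ‖t‖^(q-1) := by
            rw [← pow_succ', Nat.sub_zero, ← Nat.sub_add_comm (by omega), Nat.add_sub_cancel]
        _ ≤ ‖t‖ * max (‖t‖^(q-1)) (b * ‖v‖^(q-1)) := by
            apply mul_le_mul_of_nonneg_left (le_max_left _ _) (norm_nonneg t)
    · have hbk : ‖((q.choose k : ℕ) : C)‖ ≤ b := hch k hk0 hkq
      have h1 : ‖v‖^k * ‖t‖^(q-k) ≤ ‖t‖ * ‖v‖^(q-1) := by
        have e1 : q - k = (q - 1 - k) + 1 := by omega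
        rw [e1, pow_succ]
        have h2 : ‖t‖^(q-1-k) ≤ ‖v‖^(q-1-k) := pow_le_pow_left₀ (norm_nonneg _) h _
        calc ‖v‖^k * (‖t‖^(q-1-k) * ‖t‖) ≤ ‖v‖^k * (‖v‖^(q-1-k) * ‖t‖) := by
              apply mul_le_mul_of_nonneg_left (mul_le_mul_of_nonneg_right h2 (norm_nonneg _))
                (by positivity)
          _ = ‖t‖ * ‖v‖^(q-1) := by
              rw [← mul_assoc, ← pow_add, show k + (q-1-k) = q - 1 by omega]; ring
      calc ‖v‖^k * ‖t‖^(q-k) * ‖((q.choose k : ℕ) : C)‖ ≤ (‖t‖ * ‖v‖^(q-1)) * b := by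
            apply mul_le_mul h1 hbk (norm_nonneg _) (by positivity)
        _ = ‖t‖ * (b * ‖v‖^(q-1)) := by ring
        _ ≤ ‖t‖ * max (‖t‖^(q-1)) (b * ‖v‖^(q-1)) := by
            apply mul_le_mul_of_nonneg_left (le_max_right _ _) (norm_nonneg t)

end Ultra

section Kap
variable {C : Type*} [NormedField C] [IsUltrametricDist C] (π : C) (q : ℕ)

/-- admissibility of a pair of points -/
def Good (v w : C) : Prop :=
  0 < ‖v‖ ∧ ‖v‖ < 1 ∧ ‖v - w‖ < ‖v‖ ∧ ‖v - w‖^(q-1) * ‖v‖^2 < ‖π‖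

/-- contraction factor -/
noncomputable def kap (v w : C) : ℝ :=
  max (max ((‖v - w‖^(q-1) * ‖v‖^2) / ‖π‖) (‖v‖^(q+1))) (max (‖v - w‖ / ‖v‖) ‖π‖)

variable {π q}

lemma kap_nonneg (ha0 : 0 < ‖π‖) (v w : C) : 0 ≤ kap π q v w :=
  le_trans ha0.le (le_trans (le_max_right _ _) (le_max_right _ _))

lemma kap_lt_one (ha0 : 0 < ‖π‖) (ha1 : ‖π‖ < 1) {v w : C} (h : Good π q v w) :
    kap π q v w < 1 := by
  obtain ⟨h0, h1, h2, h3⟩ := h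
  apply max_lt (max_lt _ _) (max_lt _ _)
  · rwa [div_lt_one ha0]
  · exact pow_lt_one₀ (norm_nonneg _) h1 (by omega)
  · rwa [div_lt_one h0]
  · exact ha1

lemma kap_le_one (ha0 : 0 < ‖π‖) (ha1 : ‖π‖ < 1) {v w : C} (h : Good π q v w) :
    kap π q v w ≤ 1 := (kap_lt_one ha0 ha1 h).le

lemma a_le_kap (v w : C) : ‖π‖ ≤ kap π q v w :=
  le_trans (le_max_right _ _) (le_max_right _ _)

lemma eta_div_le_kap (v w : C) : ‖v - w‖ / ‖v‖ ≤ kap π q v w :=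
  le_trans (le_max_left _ _) (le_max_right _ _)

lemma eta_le_kap_mul {v w : C} (h0 : 0 < ‖v‖) : ‖v - w‖ ≤ kap π q v w * ‖v‖ := by
  calc ‖v - w‖ = (‖v - w‖ / ‖v‖) * ‖v‖ := by field_simp
    _ ≤ kap π q v w * ‖v‖ :=
      mul_le_mul_of_nonneg_right (eta_div_le_kap v w) (norm_nonneg _)

lemma eta1_bound (hq2 : 2 ≤ q)
    (hch : ∀ i, 0 < i → i < q → ‖((q.choose i : ℕ) : C)‖ ≤ ‖π‖)
    {v w : C} (h2le : ‖v - w‖ ≤ ‖v‖) :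
    ‖v^q - w^q‖ ≤ ‖v - w‖ * max (‖v - w‖^(q-1)) (‖π‖ * ‖v‖^(q-1)) := by
  have := pow_diff_bound hq2 hch v w (by rw [norm_sub_rev]; exact h2le)
  calc ‖v^q - w^q‖ = ‖w^q - v^q‖ := by rw [norm_sub_rev]
    _ ≤ ‖w - v‖ * max (‖w - v‖^(q-1)) (‖π‖ * ‖v‖^(q-1)) := this
    _ = ‖v - w‖ * max (‖v - w‖^(q-1)) (‖π‖ * ‖v‖^(q-1)) := by rw [norm_sub_rev w v]

lemma K1 (hq2 : 2 ≤ q) (ha0 : 0 < ‖π‖)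
    (hch : ∀ i, 0 < i → i < q → ‖((q.choose i : ℕ) : C)‖ ≤ ‖π‖)
    {v w : C} (h : Good π q v w) :
    ‖v^q - w^q‖ * ‖v‖^2 ≤ kap π q v w * ‖v - w‖ * ‖π‖ := by
  obtain ⟨h0, h1, h2, h3⟩ := h
  calc ‖v^q - w^q‖ * ‖v‖^2
      ≤ (‖v - w‖ * max (‖v - w‖^(q-1)) (‖π‖ * ‖v‖^(q-1))) * ‖v‖^2 := by
        apply mul_le_mul_of_nonneg_right (eta1_bound hq2 hch h2.le) (by positivity)
    _ = ‖v - w‖ * (max (‖v - w‖^(q-1)) (‖π‖ * ‖v‖^(q-1)) * ‖v‖^2) := by ring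
    _ ≤ ‖v - w‖ * (kap π q v w * ‖π‖) := by
        apply mul_le_mul_of_nonneg_left _ (norm_nonneg _)
        rw [max_mul_of_nonneg _ _ (by positivity : (0:ℝ) ≤ ‖v‖^2)]
        apply max_le
        · calc ‖v - w‖^(q-1) * ‖v‖^2 = (‖v - w‖^(q-1) * ‖v‖^2 / ‖π‖) * ‖π‖ := by field_simp
            _ ≤ kap π q v w * ‖π‖ := by
                apply mul_le_mul_of_nonneg_right _ ha0.le
                exact le_trans (le_max_left _ _) (le_max_left _ _)
        · calc ‖π‖ * ‖v‖^(q-1) * ‖v‖^2 = ‖v‖^(q-1) * ‖v‖^2 * ‖π‖ := by ring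
            _ = ‖v‖^(q+1) * ‖π‖ := by rw [← pow_add, show q - 1 + 2 = q + 1 by omega]
            _ ≤ kap π q v w * ‖π‖ := by
                apply mul_le_mul_of_nonneg_right _ ha0.le
                exact le_trans (le_max_right _ _) (le_max_left _ _)
    _ = kap π q v w * ‖v - w‖ * ‖π‖ := by ring

lemma K2 (hq2 : 2 ≤ q)
    (hch : ∀ i, 0 < i → i < q → ‖((q.choose i : ℕ) : C)‖ ≤ ‖π‖)
    {v w : C} (h : Good π q v w) :
    ‖v^q - w^q‖ ≤ kap π q v w * ‖v - w‖ * ‖v‖^(q-1) := by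
  obtain ⟨h0, h1, h2, h3⟩ := h
  calc ‖v^q - w^q‖ ≤ ‖v - w‖ * max (‖v - w‖^(q-1)) (‖π‖ * ‖v‖^(q-1)) :=
        eta1_bound hq2 hch h2.le
    _ ≤ ‖v - w‖ * (kap π q v w * ‖v‖^(q-1)) := by
        apply mul_le_mul_of_nonneg_left _ (norm_nonneg _)
        apply max_le
        · have e1 : ‖v - w‖^(q-1) = (‖v - w‖ / ‖v‖)^(q-1) * ‖v‖^(q-1) := by
            rw [div_pow, div_mul_cancel₀]; positivity
          rw [e1]
          apply mul_le_mul_of_nonneg_right _ (by positivity)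
          have hd1 : ‖v - w‖ / ‖v‖ ≤ 1 := by rw [div_le_one h0]; exact h2.le
          have hd0 : 0 ≤ ‖v - w‖ / ‖v‖ := by positivity
          calc (‖v - w‖ / ‖v‖)^(q-1) ≤ ‖v - w‖ / ‖v‖ := pow_le_of_le_one hd0 hd1 (by omega)
            _ ≤ kap π q v w := eta_div_le_kap v w
        · exact mul_le_mul_of_nonneg_right (a_le_kap v w) (by positivity)
    _ = kap π q v w * ‖v - w‖ * ‖v‖^(q-1) := by ring

lemma K3 (hq2 : 2 ≤ q) (ha1 : ‖π‖ < 1)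
    (hch : ∀ i, 0 < i → i < q → ‖((q.choose i : ℕ) : C)‖ ≤ ‖π‖)
    {v w : C} (h : Good π q v w) :
    ‖v^q - w^q‖ ≤ kap π q v w * ‖v - w‖ := by
  obtain ⟨h0, h1, h2, h3⟩ := h
  calc ‖v^q - w^q‖ ≤ ‖v - w‖ * max (‖v - w‖^(q-1)) (‖π‖ * ‖v‖^(q-1)) :=
        eta1_bound hq2 hch h2.le
    _ ≤ ‖v - w‖ * kap π q v w := by
        apply mul_le_mul_of_nonneg_left _ (norm_nonneg _)
        apply max_le
        · have hvw1 : ‖v - w‖ ≤ 1 := le_trans h2.le h1.le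
          calc ‖v - w‖^(q-1) ≤ ‖v - w‖ := pow_le_of_le_one (norm_nonneg _) hvw1 (by omega)
            _ = (‖v - w‖ / ‖v‖) * ‖v‖ := by field_simp
            _ ≤ (‖v - w‖ / ‖v‖) * 1 := by
                exact mul_le_mul_of_nonneg_left h1.le (by positivity)
            _ = ‖v - w‖ / ‖v‖ := by ring
            _ ≤ kap π q v w := eta_div_le_kap v w
        · calc ‖π‖ * ‖v‖^(q-1) ≤ ‖π‖ * 1 := by
                apply mul_le_mul_of_nonneg_left (pow_le_one₀ (norm_nonneg _) h1.le)
                  (norm_nonneg _)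
            _ = ‖π‖ := by ring
            _ ≤ kap π q v w := a_le_kap v w
    _ = kap π q v w * ‖v - w‖ := by ring

lemma Good_prop (hq2 : 2 ≤ q) (ha0 : 0 < ‖π‖) (ha1 : ‖π‖ < 1)
    (hch : ∀ i, 0 < i → i < q → ‖((q.choose i : ℕ) : C)‖ ≤ ‖π‖)
    {v w : C} (h : Good π q v w) : Good π q (v^q) (w^q) := by
  obtain ⟨h0, h1, h2, h3⟩ := h
  have hb := eta1_bound hq2 hch (π := π) (v := v) (w := w) h2.le
  have hr : ‖v^q‖ = ‖v‖^q := norm_pow v q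
  have hqpos : q - 1 ≠ 0 := by omega
  refine ⟨?_, ?_, ?_, ?_⟩
  · rw [hr]; positivity
  · rw [hr]; exact pow_lt_one₀ (norm_nonneg _) h1 (by omega)
  · rw [hr]
    calc ‖v^q - w^q‖ ≤ ‖v - w‖ * max (‖v - w‖^(q-1)) (‖π‖ * ‖v‖^(q-1)) := hb
      _ < ‖v‖ * ‖v‖^(q-1) := by
          apply mul_lt_mul' h2.le _ (le_max_iff.mpr (Or.inl (by positivity))) h0
          apply max_lt
          · exact pow_lt_pow_left₀ h2 (norm_nonneg _) hqpos
          · calc ‖π‖ * ‖v‖^(q-1) < 1 * ‖v‖^(q-1) :=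
                  mul_lt_mul_of_pos_right ha1 (by positivity)
              _ = ‖v‖^(q-1) := by ring
      _ = ‖v‖^q := by rw [← pow_succ', show q - 1 + 1 = q by omega]
  · -- ‖v^q - w^q‖^(q-1) * ‖v^q‖^2 < ‖π‖
    rw [hr, ← pow_mul]
    have hbb : ‖v^q - w^q‖ ≤ max (‖v - w‖^q) (‖π‖ * ‖v - w‖ * ‖v‖^(q-1)) := by
      calc ‖v^q - w^q‖ ≤ ‖v - w‖ * max (‖v - w‖^(q-1)) (‖π‖ * ‖v‖^(q-1)) := hb
        _ = max (‖v - w‖ * ‖v - w‖^(q-1)) (‖v - w‖ * (‖π‖ * ‖v‖^(q-1))) := by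
            rw [mul_max_of_nonneg _ _ (norm_nonneg _)]
        _ = max (‖v - w‖^q) (‖π‖ * ‖v - w‖ * ‖v‖^(q-1)) := by
            rw [← pow_succ', show q - 1 + 1 = q by omega]; ring_nf
    have key : ∀ z : ℝ, 0 ≤ z → z ≤ max (‖v - w‖^q) (‖π‖ * ‖v - w‖ * ‖v‖^(q-1)) →
        z^(q-1) * ‖v‖^(q*2) < ‖π‖ := by
      intro z hz0 hz
      rcases max_cases (‖v - w‖^q) (‖π‖ * ‖v - w‖ * ‖v‖^(q-1)) with ⟨hmx, _⟩ | ⟨hmx, _⟩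
      · -- max = ‖v-w‖^q
        rw [hmx] at hz
        calc z^(q-1) * ‖v‖^(q*2) ≤ (‖v - w‖^q)^(q-1) * ‖v‖^(q*2) := by
              apply mul_le_mul_of_nonneg_right (pow_le_pow_left₀ hz0 hz _) (by positivity)
          _ = (‖v - w‖^(q-1) * ‖v‖^2)^q := by
              rw [mul_pow, ← pow_mul, ← pow_mul]; ring_nf
          _ < ‖π‖^q := by
              apply pow_lt_pow_left₀ h3 (by positivity) (by omega)
          _ ≤ ‖π‖ := pow_le_of_le_one ha0.le ha1.le (by omega)
      · rw [hmx] at hz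
        have hvw1 : ‖v - w‖ ≤ ‖v‖ := h2.le
        calc z^(q-1) * ‖v‖^(q*2)
            ≤ (‖π‖ * ‖v - w‖ * ‖v‖^(q-1))^(q-1) * ‖v‖^(q*2) := by
              apply mul_le_mul_of_nonneg_right (pow_le_pow_left₀ hz0 hz _) (by positivity)
          _ = ‖π‖^(q-1) * (‖v - w‖^(q-1) * ‖v‖^2) * ‖v‖^((q-1)*(q-1) + (q*2 - 2)) := by
              have e2 : ‖v‖^(q*2) = ‖v‖^2 * ‖v‖^(q*2 - 2) := by
                rw [← pow_add]; congr 1; omega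
              rw [mul_pow, mul_pow, ← pow_mul, e2, pow_add]; ring
          _ ≤ 1 * (‖v - w‖^(q-1) * ‖v‖^2) * 1 := by
              apply mul_le_mul
              · apply mul_le_mul_of_nonneg_right
                  (pow_le_one₀ ha0.le ha1.le) (by positivity)
              · exact pow_le_one₀ (norm_nonneg _) h1.le
              · positivity
              · positivity
          _ = ‖v - w‖^(q-1) * ‖v‖^2 := by ring
          _ < ‖π‖ := h3
    exact key _ (norm_nonneg _) hbb

end Kap

section MainLem
variable {C : Type*} [NormedField C] [IsUltrametricDist C] {π : C} {q : ℕ}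

lemma bound_via_max {c x y z K : ℝ} (hc : 0 ≤ c) (h : x ≤ max y z)
    (h1 : c*y ≤ K) (h2 : c*z ≤ K) : c*x ≤ K := by
  calc c*x ≤ c*max y z := mul_le_mul_of_nonneg_left h hc
    _ = max (c*y) (c*z) := mul_max_of_nonneg _ _ hc
    _ ≤ K := max_le h1 h2

lemma pow_shift {a : ℝ} (ha : a ≠ 0) (m k : ℕ) : a^(m+k) * (a⁻¹)^k = a^m := by
  rw [pow_add, inv_pow, mul_assoc, mul_inv_cancel₀ (pow_ne_zero _ ha), mul_one]

/-- statement of the X-bound at level n -/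
def XB (π : C) (q n : ℕ) : Prop := ∀ v w : C, Good π q v w →
  ‖π‖^(n+1) * ‖Xf π q n v w - (-1)^n * (π⁻¹)^(n+1) * (v - w)‖ ≤ kap π q v w * ‖v - w‖

/-- statement of the E-bound at level n -/
def EB (π : C) (q n : ℕ) : Prop := ∀ v w : C, Good π q v w →
  ‖π‖^(n+1) * (‖v‖ * ‖Ef π q n v w‖) ≤ kap π q v w * ‖v - w‖

lemma Good_symm {v w : C} (h : Good π q v w) : Good π q w v := by
  obtain ⟨h0, h1, h2, h3⟩ := h
  have hw : ‖w‖ = ‖v‖ := unorm_eq_of_sub_lt h2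
  rw [norm_sub_rev] at h2 h3
  exact ⟨by rw [hw]; exact h0, by rw [hw]; exact h1, by rw [hw]; exact h2,
    by rw [hw]; exact h3⟩

lemma Xtotal (ha0 : 0 < ‖π‖) (ha1 : ‖π‖ < 1) {n : ℕ} (hX : XB π q n)
    {v w : C} (hG : Good π q v w) : ‖π‖^(n+1) * ‖Xf π q n v w‖ ≤ ‖v - w‖ := by
  have hκ1 := kap_le_one ha0 ha1 hG
  have hdev := hX v w hG
  have hsplit : ‖Xf π q n v w‖ ≤
      max ‖Xf π q n v w - (-1)^n * (π⁻¹)^(n+1) * (v - w)‖ ‖(-1:C)^n * (π⁻¹)^(n+1) * (v - w)‖ := by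
    calc ‖Xf π q n v w‖
        = ‖(Xf π q n v w - (-1)^n * (π⁻¹)^(n+1) * (v - w)) + (-1)^n * (π⁻¹)^(n+1) * (v - w)‖ := by
          ring_nf
      _ ≤ _ := unorm_add_le_max _ _
  have hmain : ‖(-1:C)^n * (π⁻¹)^(n+1) * (v - w)‖ = (‖π‖^(n+1))⁻¹ * ‖v - w‖ := by
    rw [norm_mul, norm_mul, norm_pow, norm_pow, norm_neg, norm_one, one_pow, one_mul,
      norm_inv, inv_pow]
  calc ‖π‖^(n+1) * ‖Xf π q n v w‖
      ≤ ‖π‖^(n+1) * max ‖Xf π q n v w - (-1)^n * (π⁻¹)^(n+1) * (v - w)‖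
          ‖(-1:C)^n * (π⁻¹)^(n+1) * (v - w)‖ := by
        apply mul_le_mul_of_nonneg_left hsplit (by positivity)
    _ = max (‖π‖^(n+1) * ‖Xf π q n v w - (-1)^n * (π⁻¹)^(n+1) * (v - w)‖)
          (‖π‖^(n+1) * ‖(-1:C)^n * (π⁻¹)^(n+1) * (v - w)‖) := by
        rw [mul_max_of_nonneg _ _ (by positivity : (0:ℝ) ≤ ‖π‖^(n+1))]
    _ ≤ ‖v - w‖ := by
        apply max_le
        · calc ‖π‖^(n+1) * ‖Xf π q n v w - (-1)^n * (π⁻¹)^(n+1) * (v - w)‖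
              ≤ kap π q v w * ‖v - w‖ := hdev
            _ ≤ 1 * ‖v - w‖ := mul_le_mul_of_nonneg_right hκ1 (norm_nonneg _)
            _ = ‖v - w‖ := one_mul _
        · rw [hmain, ← mul_assoc, mul_inv_cancel₀ (by positivity), one_mul]

lemma Etotal (ha0 : 0 < ‖π‖) (ha1 : ‖π‖ < 1) {n : ℕ} (hE : EB π q n)
    {v w : C} (hG : Good π q v w) :
    ‖π‖^(n+1) * ‖Ef π q n v w‖ ≤ ‖v - w‖ / ‖v‖ := by
  have hκ1 := kap_le_one ha0 ha1 hG
  have h0 := hG.1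
  rw [le_div_iff₀ h0]
  calc ‖π‖^(n+1) * ‖Ef π q n v w‖ * ‖v‖ = ‖π‖^(n+1) * (‖v‖ * ‖Ef π q n v w‖) := by ring
    _ ≤ kap π q v w * ‖v - w‖ := hE v w hG
    _ ≤ 1 * ‖v - w‖ := mul_le_mul_of_nonneg_right hκ1 (norm_nonneg _)
    _ = ‖v - w‖ := one_mul _

theorem XE_bound (hq2 : 2 ≤ q) (ha0 : 0 < ‖π‖) (ha1 : ‖π‖ < 1)
    (hch : ∀ i, 0 < i → i < q → ‖((q.choose i : ℕ) : C)‖ ≤ ‖π‖) :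
    ∀ n, XB π q n ∧ EB π q n := by
  have hπ : (π : C) ≠ 0 := by
    intro h; rw [h, norm_zero] at ha0; exact lt_irrefl _ ha0
  have haa : ‖π‖ ≠ 0 := ne_of_gt ha0
  intro n
  induction n using Nat.strong_induction_on with
  | _ n IH =>
  -- first the X bound
  have hXB : XB π q n := by
    intro v w hG
    obtain ⟨h0, h1, h2, h3⟩ := hG
    have hG' : Good π q v w := ⟨h0, h1, h2, h3⟩
    have hw : ‖w‖ = ‖v‖ := unorm_eq_of_sub_lt h2
    have hκ0 : 0 ≤ kap π q v w := kap_nonneg ha0 v w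
    have hG1 : Good π q (v^q) (w^q) := Good_prop hq2 ha0 ha1 hch hG'
    have hGs : Good π q w v := Good_symm hG'
    have hGs1 : Good π q (w^q) (v^q) := Good_prop hq2 ha0 ha1 hch hGs
    have hG2 : Good π q (v^(q^2)) (w^(q^2)) := by
      have := Good_prop hq2 ha0 ha1 hch hG1
      rwa [pow_q_sq, pow_q_sq] at this
    -- key scalar inequalities
    have PA : ‖v^q - w^q‖ * ‖v‖^2 * ‖π‖⁻¹ ≤ kap π q v w * ‖v - w‖ := by
      rw [← div_eq_mul_inv, div_le_iff₀ ha0]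
      exact K1 hq2 ha0 hch hG'
    have PB : ‖v‖ * ‖v^q - w^q‖ * (‖v‖^q)⁻¹ ≤ kap π q v w * ‖v - w‖ := by
      have hrq : ‖v‖^q = ‖v‖^(q-1) * ‖v‖ := by
        rw [← pow_succ, show q - 1 + 1 = q by omega]
      rw [← div_eq_mul_inv, div_le_iff₀ (by positivity), hrq]
      calc ‖v‖ * ‖v^q - w^q‖ ≤ ‖v‖ * (kap π q v w * ‖v - w‖ * ‖v‖^(q-1)) :=
            mul_le_mul_of_nonneg_left (K2 hq2 hch hG') (norm_nonneg _)
        _ = kap π q v w * ‖v - w‖ * (‖v‖^(q-1) * ‖v‖) := by ring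
    have PC : ‖v^(q^2) - w^(q^2)‖ ≤ kap π q v w * ‖v - w‖ := by
      have s1 : ‖(v^q)^q - (w^q)^q‖ ≤ kap π q (v^q) (w^q) * ‖v^q - w^q‖ :=
        K3 hq2 ha1 hch hG1
      rw [pow_q_sq, pow_q_sq] at s1
      calc ‖v^(q^2) - w^(q^2)‖ ≤ kap π q (v^q) (w^q) * ‖v^q - w^q‖ := s1
        _ ≤ 1 * ‖v^q - w^q‖ :=
            mul_le_mul_of_nonneg_right (kap_le_one ha0 ha1 hG1) (norm_nonneg _)
        _ = ‖v^q - w^q‖ := one_mul _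
        _ ≤ kap π q v w * ‖v - w‖ := K3 hq2 ha1 hch hG'
    match n, IH with
    | 0, _ => -- base case 0
      have hd : Xf π q 0 v w - (-1)^0 * (π⁻¹)^(0+1) * (v - w) = 0 := by
        rw [Xf_zero_eq]; ring
      rw [hd, norm_zero, mul_zero]
      positivity
    | 1, _ => -- base case 1
      have hd : Xf π q 1 v w - (-1)^1 * (π⁻¹)^(1+1) * (v - w)
          = v * w * (v^q - w^q) * (π⁻¹)^3 := by
        rw [Xf_one_eq]; ring
      rw [hd]
      rw [norm_mul, norm_mul, norm_mul, norm_pow, norm_inv]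
      calc ‖π‖^(1+1) * (‖v‖ * ‖w‖ * ‖v^q - w^q‖ * ‖π‖⁻¹^3)
          = ‖v^q - w^q‖ * ‖v‖^2 * ‖π‖⁻¹ := by
            rw [hw]
            have : (‖π‖:ℝ)^(1+1) * ‖π‖⁻¹^3 = ‖π‖⁻¹ := by
              field_simp
            calc ‖π‖^(1+1) * (‖v‖ * ‖v‖ * ‖v^q - w^q‖ * ‖π‖⁻¹^3)
                = (‖π‖^(1+1) * ‖π‖⁻¹^3) * (‖v‖ * ‖v‖ * ‖v^q - w^q‖) := by ring
              _ = ‖v^q - w^q‖ * ‖v‖^2 * ‖π‖⁻¹ := by rw [this]; ring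
        _ ≤ kap π q v w * ‖v - w‖ := PA
    | (m+2), IH =>
      have hXm1 : XB π q (m+1) := (IH (m+1) (by omega)).1
      have hXm : XB π q m := (IH m (by omega)).1
      have hEm : EB π q m := (IH m (by omega)).2
      -- the deviation equals sum of four terms
      have hd : Xf π q (m+2) v w - (-1)^(m+2) * (π⁻¹)^(m+2+1) * (v - w)
          = (v*w*(π⁻¹)^2) * Xf π q (m+1) (v^q) (w^q)
            + (π⁻¹)^2 * Xf π q m (v^(q^2)) (w^(q^2))
            + ((v*(π⁻¹)^2) * Ef π q m (v^q) (w^q)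
              - (w*(π⁻¹)^2) * Ef π q m (w^q) (v^q)) := by
        rw [Xf_rec]
        have : ((-1:C))^(m+2) = (-1)^m := by
          rw [pow_add]; norm_num
        rw [this]; ring
      rw [hd]
      -- bound the four terms
      have bT1 : ‖π‖^(m+2+1) * ‖(v*w*(π⁻¹)^2) * Xf π q (m+1) (v^q) (w^q)‖
          ≤ kap π q v w * ‖v - w‖ := by
        rw [norm_mul, norm_mul, norm_mul, norm_pow, norm_inv, hw]
        have e1 : ‖π‖^(m+2+1) * (‖v‖ * ‖v‖ * ‖π‖⁻¹^2 * ‖Xf π q (m+1) (v^q) (w^q)‖)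
            = (‖v‖^2 * ‖π‖⁻¹) * (‖π‖^(m+1+1) * ‖Xf π q (m+1) (v^q) (w^q)‖) := by
          have : (‖π‖:ℝ)^(m+3) = ‖π‖ * ‖π‖^(m+2) := by rw [← pow_succ']
          rw [show m+2+1 = m+3 from rfl, this]
          field_simp
        rw [e1]
        have hXt : ‖π‖^(m+1+1) * ‖Xf π q (m+1) (v^q) (w^q)‖ ≤ ‖v^q - w^q‖ :=
          Xtotal ha0 ha1 hXm1 hG1
        calc (‖v‖^2 * ‖π‖⁻¹) * (‖π‖^(m+1+1) * ‖Xf π q (m+1) (v^q) (w^q)‖)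
            ≤ (‖v‖^2 * ‖π‖⁻¹) * ‖v^q - w^q‖ := by
              apply mul_le_mul_of_nonneg_left hXt (by positivity)
          _ = ‖v^q - w^q‖ * ‖v‖^2 * ‖π‖⁻¹ := by ring
          _ ≤ kap π q v w * ‖v - w‖ := PA
      have bT2 : ‖π‖^(m+2+1) * ‖(π⁻¹)^2 * Xf π q m (v^(q^2)) (w^(q^2))‖
          ≤ kap π q v w * ‖v - w‖ := by
        rw [norm_mul, norm_pow, norm_inv]
        have e1 : ‖π‖^(m+2+1) * (‖π‖⁻¹^2 * ‖Xf π q m (v^(q^2)) (w^(q^2))‖)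
            = ‖π‖^(m+1) * ‖Xf π q m (v^(q^2)) (w^(q^2))‖ := by
          rw [show m+2+1 = (m+1)+2 from by omega, ← mul_assoc, pow_shift haa]
        rw [e1]
        calc ‖π‖^(m+1) * ‖Xf π q m (v^(q^2)) (w^(q^2))‖ ≤ ‖v^(q^2) - w^(q^2)‖ :=
              Xtotal ha0 ha1 hXm hG2
          _ ≤ kap π q v w * ‖v - w‖ := PC
      have bT3gen : ∀ x y : C, Good π q x y → ‖x‖ = ‖v‖ → ‖x^q - y^q‖ = ‖v^q - w^q‖ →
          ‖π‖^(m+2+1) * ‖(x*(π⁻¹)^2) * Ef π q m (x^q) (y^q)‖ ≤ kap π q v w * ‖v - w‖ := by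
        intro x y hGxy hx hxy
        have hGq : Good π q (x^q) (y^q) := Good_prop hq2 ha0 ha1 hch hGxy
        rw [norm_mul, norm_mul, norm_pow, norm_inv, hx]
        have e1 : ‖π‖^(m+2+1) * (‖v‖ * ‖π‖⁻¹^2 * ‖Ef π q m (x^q) (y^q)‖)
            = ‖v‖ * (‖π‖^(m+1) * ‖Ef π q m (x^q) (y^q)‖) := by
          rw [show m+2+1 = (m+1)+2 from by omega]
          have := pow_shift haa (m+1) 2 (a := ‖π‖)
          calc ‖π‖^(m+1+2) * (‖v‖ * ‖π‖⁻¹^2 * ‖Ef π q m (x^q) (y^q)‖)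
              = (‖π‖^(m+1+2) * (‖π‖⁻¹)^2) * (‖v‖ * ‖Ef π q m (x^q) (y^q)‖) := by ring
            _ = ‖v‖ * (‖π‖^(m+1) * ‖Ef π q m (x^q) (y^q)‖) := by rw [this]; ring
        rw [e1]
        have hEt : ‖π‖^(m+1) * ‖Ef π q m (x^q) (y^q)‖ ≤ ‖x^q - y^q‖ / ‖x^q‖ :=
          Etotal ha0 ha1 hEm hGq
        have hxq : ‖x^q‖ = ‖v‖^q := by rw [norm_pow, hx]
        rw [hxy, hxq] at hEt
        calc ‖v‖ * (‖π‖^(m+1) * ‖Ef π q m (x^q) (y^q)‖)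
            ≤ ‖v‖ * (‖v^q - w^q‖ / ‖v‖^q) := by
              apply mul_le_mul_of_nonneg_left hEt (norm_nonneg _)
          _ = ‖v‖ * ‖v^q - w^q‖ * (‖v‖^q)⁻¹ := by rw [div_eq_mul_inv]; ring
          _ ≤ kap π q v w * ‖v - w‖ := PB
      have bT3 := bT3gen v w hG' rfl rfl
      have bT4 := bT3gen w v hGs hw (by rw [norm_sub_rev])
      -- assemble
      have hmax : ‖(v*w*(π⁻¹)^2) * Xf π q (m+1) (v^q) (w^q)
            + (π⁻¹)^2 * Xf π q m (v^(q^2)) (w^(q^2))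
            + ((v*(π⁻¹)^2) * Ef π q m (v^q) (w^q)
              - (w*(π⁻¹)^2) * Ef π q m (w^q) (v^q))‖
          ≤ max (max ‖(v*w*(π⁻¹)^2) * Xf π q (m+1) (v^q) (w^q)‖
              ‖(π⁻¹)^2 * Xf π q m (v^(q^2)) (w^(q^2))‖)
              (max ‖(v*(π⁻¹)^2) * Ef π q m (v^q) (w^q)‖
                ‖(w*(π⁻¹)^2) * Ef π q m (w^q) (v^q)‖) :=
        le_trans (unorm_add_le_max _ _)
          (max_le_max (unorm_add_le_max _ _) (unorm_sub_le_max _ _))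
      apply bound_via_max (by positivity : (0:ℝ) ≤ ‖π‖^(m+2+1)) hmax
      · rw [mul_max_of_nonneg _ _ (by positivity : (0:ℝ) ≤ ‖π‖^(m+2+1))]
        exact max_le bT1 bT2
      · rw [mul_max_of_nonneg _ _ (by positivity : (0:ℝ) ≤ ‖π‖^(m+2+1))]
        exact max_le bT3 bT4
  -- now the E bound
  have hEB : EB π q n := by
    intro v w hG
    obtain ⟨h0, h1, h2, h3⟩ := hG
    have hG' : Good π q v w := ⟨h0, h1, h2, h3⟩
    have hw : ‖w‖ = ‖v‖ := unorm_eq_of_sub_lt h2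
    have hG1 : Good π q (v^q) (w^q) := Good_prop hq2 ha0 ha1 hch hG'
    have hGs : Good π q w v := Good_symm hG'
    have hGs1 : Good π q (w^q) (v^q) := Good_prop hq2 ha0 ha1 hch hGs
    have PA : ‖v^q - w^q‖ * ‖v‖^2 * ‖π‖⁻¹ ≤ kap π q v w * ‖v - w‖ := by
      rw [← div_eq_mul_inv, div_le_iff₀ ha0]
      exact K1 hq2 ha0 hch hG'
    have PB : ‖v‖ * ‖v^q - w^q‖ * (‖v‖^q)⁻¹ ≤ kap π q v w * ‖v - w‖ := by
      have hrq : ‖v‖^q = ‖v‖^(q-1) * ‖v‖ := by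
        rw [← pow_succ, show q - 1 + 1 = q by omega]
      rw [← div_eq_mul_inv, div_le_iff₀ (by positivity), hrq]
      calc ‖v‖ * ‖v^q - w^q‖ ≤ ‖v‖ * (kap π q v w * ‖v - w‖ * ‖v‖^(q-1)) :=
            mul_le_mul_of_nonneg_left (K2 hq2 hch hG') (norm_nonneg _)
        _ = kap π q v w * ‖v - w‖ * (‖v‖^(q-1) * ‖v‖) := by ring
    match n, hXB, IH with
    | 0, _, _ =>
      rw [Ef_zero_eq]
      rw [norm_mul, norm_mul, norm_pow, norm_inv]
      have e1 : ‖π‖^(0+1) * (‖v‖ * (‖v‖ * ‖v^q - w^q‖ * ‖π‖⁻¹^2))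
          = ‖v^q - w^q‖ * ‖v‖^2 * ‖π‖⁻¹ := by
        have : (‖π‖:ℝ)^(0+1) * ‖π‖⁻¹^2 = ‖π‖⁻¹ := by
          field_simp
          ring
        calc ‖π‖^(0+1) * (‖v‖ * (‖v‖ * ‖v^q - w^q‖ * ‖π‖⁻¹^2))
            = (‖π‖^(0+1) * ‖π‖⁻¹^2) * (‖v‖ * ‖v‖ * ‖v^q - w^q‖) := by ring
          _ = ‖v^q - w^q‖ * ‖v‖^2 * ‖π‖⁻¹ := by rw [this]; ring
      rw [e1]
      exact PA
    | (m+1), hXB, IH =>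
      have hEm : EB π q m := (IH m (by omega)).2
      rw [Ef_rec]
      have hbnd : ‖(v * π⁻¹) * Xf π q (m+1) (v^q) (w^q) - π⁻¹ * Ef π q m (w^q) (v^q)‖
          ≤ max ‖(v * π⁻¹) * Xf π q (m+1) (v^q) (w^q)‖ ‖π⁻¹ * Ef π q m (w^q) (v^q)‖ :=
        unorm_sub_le_max _ _
      have hgoal : ‖π‖^(m+1+1) * (‖v‖ * ‖(v * π⁻¹) * Xf π q (m+1) (v^q) (w^q)
            - π⁻¹ * Ef π q m (w^q) (v^q)‖)
          = (‖π‖^(m+1+1) * ‖v‖) * ‖(v * π⁻¹) * Xf π q (m+1) (v^q) (w^q)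
            - π⁻¹ * Ef π q m (w^q) (v^q)‖ := by ring
      rw [hgoal]
      apply bound_via_max (by positivity : (0:ℝ) ≤ ‖π‖^(m+1+1) * ‖v‖) hbnd
      · -- X part
        have hXt : ‖π‖^(m+1+1) * ‖Xf π q (m+1) (v^q) (w^q)‖ ≤ ‖v^q - w^q‖ :=
          Xtotal ha0 ha1 hXB hG1
        have e1 : (‖π‖^(m+1+1) * ‖v‖) * ‖(v * π⁻¹) * Xf π q (m+1) (v^q) (w^q)‖
            = (‖v‖^2 * ‖π‖⁻¹) * (‖π‖^(m+1+1) * ‖Xf π q (m+1) (v^q) (w^q)‖) := by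
          rw [norm_mul, norm_mul, norm_inv]
          ring
        rw [e1]
        calc (‖v‖^2 * ‖π‖⁻¹) * (‖π‖^(m+1+1) * ‖Xf π q (m+1) (v^q) (w^q)‖)
            ≤ (‖v‖^2 * ‖π‖⁻¹) * ‖v^q - w^q‖ :=
              mul_le_mul_of_nonneg_left hXt (by positivity)
          _ = ‖v^q - w^q‖ * ‖v‖^2 * ‖π‖⁻¹ := by ring
          _ ≤ kap π q v w * ‖v - w‖ := PA
      · -- E part
        have hEt : ‖π‖^(m+1) * ‖Ef π q m (w^q) (v^q)‖ ≤ ‖w^q - v^q‖ / ‖w^q‖ :=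
          Etotal ha0 ha1 hEm hGs1
        have hwq : ‖w^q‖ = ‖v‖^q := by rw [norm_pow, hw]
        rw [norm_sub_rev, hwq] at hEt
        have e1 : (‖π‖^(m+1+1) * ‖v‖) * ‖π⁻¹ * Ef π q m (w^q) (v^q)‖
            = ‖v‖ * (‖π‖^(m+1) * ‖Ef π q m (w^q) (v^q)‖) := by
          rw [norm_mul, norm_inv, pow_succ]
          field_simp
        rw [e1]
        calc ‖v‖ * (‖π‖^(m+1) * ‖Ef π q m (w^q) (v^q)‖)
            ≤ ‖v‖ * (‖v^q - w^q‖ / ‖v‖^q) :=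
              mul_le_mul_of_nonneg_left hEt (norm_nonneg _)
          _ = ‖v‖ * ‖v^q - w^q‖ * (‖v‖^q)⁻¹ := by rw [div_eq_mul_inv]; ring
          _ ≤ kap π q v w * ‖v - w‖ := PB
  exact ⟨hXB, hEB⟩

end MainLem

section Annulus
variable {C : Type*} [NormedField C] [IsUltrametricDist C] {π : C} {q : ℕ}

/-- geometric sum `1 + q + ... + q^(t-1)` -/
def myQ (q : ℕ) : ℕ → ℕ
  | 0 => 0
  | (t+1) => 1 + q * myQ q t

lemma myQ_eq_sum (q t : ℕ) : myQ q t = ∑ i ∈ Finset.range t, q^i := by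
  induction t with
  | zero => simp [myQ]
  | succ t ih =>
      rw [Finset.sum_range_succ', myQ, ih, Finset.mul_sum]
      simp only [pow_zero, pow_succ]
      rw [add_comm]
      congr 1
      apply Finset.sum_congr rfl
      intro i _
      ring

/-- region parameterization: `τ = s+1` where `s` is the annulus index; `τ = 0` is the
deep region `r^(q+1) < a`. -/
def Regio (a : ℝ) (q τ : ℕ) (r : ℝ) : Prop :=
  0 < r ∧ r < 1 ∧ r^(q^(τ+1)+q^τ) < a ∧ (1 ≤ τ → a^q < r^(q^τ + q^(τ-1)))

/-- the norm of `ghm n` on region `τ`, when `n ≡ τ [MOD 2]` -/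
noncomputable def valGP (a : ℝ) (q τ n : ℕ) (r : ℝ) : ℝ :=
  if n ≤ τ then r^(myQ q n) * (a^n)⁻¹ else r^(myQ q τ) * (a^((n+τ)/2))⁻¹

lemma valGP_zero {a : ℝ} {n : ℕ} (r : ℝ) : valGP a q 0 n r = (a^(n/2))⁻¹ := by
  unfold valGP
  split_ifs with h
  · have : n = 0 := by omega
    subst this; simp [myQ]
  · simp [myQ]

lemma valGP_one {a : ℝ} {n : ℕ} (r : ℝ) (hn : n % 2 = 1) :
    valGP a q 1 n r = r^(myQ q 1) * (a^((n+1)/2))⁻¹ := by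
  unfold valGP
  split_ifs with h
  · have : n = 1 := by omega
    subst this; norm_num
  · congr 2

lemma Regio_down (hq2 : 2 ≤ q) {a r : ℝ} {τ : ℕ} (h : Regio a q (τ+1) r) :
    Regio a q τ (r^q) := by
  obtain ⟨h0, h1, h2, h3⟩ := h
  refine ⟨by positivity, pow_lt_one₀ h0.le h1 (by omega), ?_, ?_⟩
  · rw [← pow_mul]
    calc r^(q*(q^(τ+1)+q^τ)) = r^(q^(τ+1+1)+q^(τ+1)) := by
          congr 1
          ring
      _ < a := h2
  · intro hτ
    obtain ⟨t, rfl⟩ : ∃ t, τ = t+1 := ⟨τ-1, by omega⟩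
    have h4 := h3 (by omega)
    rw [← pow_mul]
    calc a^q < r^(q^(t+1+1) + q^(t+1+1-1)) := h4
      _ = r^(q*(q^(t+1) + q^(t+1-1))) := by
          congr 1
          simp only [Nat.add_sub_cancel]
          ring

lemma Regio_deep_down (hq2 : 2 ≤ q) {a r : ℝ} (h : Regio a q 0 r) :
    Regio a q 0 (r^q) := by
  obtain ⟨h0, h1, h2, h3⟩ := h
  refine ⟨by positivity, pow_lt_one₀ h0.le h1 (by omega), ?_, by omega⟩
  rw [← pow_mul]
  calc r^(q*(q^(0+1)+q^0)) ≤ r^(q^(0+1)+q^0) := by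
        apply pow_le_pow_of_le_one h0.le h1.le
        calc q^(0+1)+q^0 = 1*(q^(0+1)+q^0) := by ring
          _ ≤ q*(q^(0+1)+q^0) := by
              apply Nat.mul_le_mul_right
              omega
    _ < a := h2

/-- any region propagates down one step (to `τ-1` if `τ ≥ 1`, else stays deep) -/
lemma Regio_down' (hq2 : 2 ≤ q) {a r : ℝ} {τ : ℕ} (h : Regio a q τ r) :
    Regio a q (τ-1) (r^q) := by
  cases τ with
  | zero => exact Regio_deep_down hq2 h
  | succ τ' => exact Regio_down hq2 h

lemma Regio_a_lt (hq2 : 2 ≤ q) {a r : ℝ} {τ : ℕ} (ha0 : 0 < a) (hτ : 2 ≤ τ)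
    (h : Regio a q τ r) : a < r^(1+q) := by
  obtain ⟨h0, h1, h2, h3⟩ := h
  have h4 := h3 (by omega)
  have hle : r^(q^τ + q^(τ-1)) ≤ r^((1+q)*q) := by
    apply pow_le_pow_of_le_one h0.le h1.le
    have e2 : q^2 ≤ q^τ := Nat.pow_le_pow_right (by omega) (by omega)
    have e3 : q^1 ≤ q^(τ-1) := Nat.pow_le_pow_right (by omega) (by omega)
    have e4 : q^2 = q*q := by ring
    have e5 : q^1 = q := by ring
    have e6 : (1+q)*q = q + q*q := by ring
    omega
  have : a^q < (r^(1+q))^q := by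
    rw [← pow_mul]
    exact lt_of_lt_of_le h4 hle
  exact lt_of_pow_lt_pow_left₀ q (by positivity) this

lemma dom_helper1 {a c P : ℝ} (ha0 : 0 < a) (hP : 0 < P) (hrc : c < a) (hc : 0 ≤ c) :
    c * a⁻¹ * P < P := by
  have h1 : c * a⁻¹ < 1 := by
    rw [← div_eq_mul_inv, div_lt_one ha0]; exact hrc
  calc c * a⁻¹ * P < 1 * P := mul_lt_mul_of_pos_right h1 hP
    _ = P := one_mul P

lemma dom_helper2 {c P : ℝ} (hP : 0 < P) (hc : c < 1) (hc0 : 0 ≤ c) : c * P < P := by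
  calc c * P < 1 * P := mul_lt_mul_of_pos_right hc hP
    _ = P := one_mul P

lemma dom_helper3 {a c P : ℝ} (ha0 : 0 < a) (hP : 0 < P) (hrc : a < c) : P < c * a⁻¹ * P := by
  have h1 : 1 < c * a⁻¹ := by
    rw [← div_eq_mul_inv, lt_div_iff₀ ha0, one_mul]; exact hrc
  calc P = 1 * P := (one_mul P).symm
    _ < c * a⁻¹ * P := mul_lt_mul_of_pos_right h1 hP

lemma pow_split1 (x : ℝ) (m : ℕ) : x^(1+m) = x * x^m := by
  rw [pow_add, pow_one]

lemma inv_succ (a : ℝ) (m : ℕ) : (a^(m+1))⁻¹ = (a^m)⁻¹ * a⁻¹ := by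
  rw [pow_succ, mul_inv]

/-- norm of recursion step when the first summand dominates -/
lemma ghm_step_left (v : C) (k : ℕ) {X Y : ℝ}
    (hX : ‖ghm π q (k+1) (v^q)‖ = X) (hY : ‖ghm π q k (v^(q^2))‖ = Y)
    (hdom : ‖π‖⁻¹ * Y < ‖v‖ * ‖π‖⁻¹ * X) :
    ‖ghm π q (k+2) v‖ = ‖v‖ * ‖π‖⁻¹ * X := by
  have e1 : ‖(v / π) * ghm π q (k+1) (v^q)‖ = ‖v‖ * ‖π‖⁻¹ * X := by
    rw [norm_mul, norm_div, hX]; ring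
  have e2 : ‖(1 / π) * ghm π q k (v^(q^2))‖ = ‖π‖⁻¹ * Y := by
    rw [norm_mul, norm_div, norm_one, hY]; ring
  rw [ghm_two, unorm_add_eq_left (by rw [e1, e2]; exact hdom)]
  exact e1

/-- norm of recursion step when the second summand dominates -/
lemma ghm_step_right (v : C) (k : ℕ) {X Y : ℝ}
    (hX : ‖ghm π q (k+1) (v^q)‖ = X) (hY : ‖ghm π q k (v^(q^2))‖ = Y)
    (hdom : ‖v‖ * ‖π‖⁻¹ * X < ‖π‖⁻¹ * Y) :
    ‖ghm π q (k+2) v‖ = ‖π‖⁻¹ * Y := by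
  have e1 : ‖(v / π) * ghm π q (k+1) (v^q)‖ = ‖v‖ * ‖π‖⁻¹ * X := by
    rw [norm_mul, norm_div, hX]; ring
  have e2 : ‖(1 / π) * ghm π q k (v^(q^2))‖ = ‖π‖⁻¹ * Y := by
    rw [norm_mul, norm_div, norm_one, hY]; ring
  rw [ghm_two, add_comm, unorm_add_eq_left (by rw [e1, e2]; exact hdom)]
  exact e2

theorem annulus (hq2 : 2 ≤ q) (ha0 : 0 < ‖π‖) (ha1 : ‖π‖ < 1) :
    ∀ n τ (v : C), Regio ‖π‖ q τ ‖v‖ →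
      ((n % 2 = τ % 2) → ‖ghm π q n v‖ = valGP ‖π‖ q τ n ‖v‖) ∧
      (τ = 0 → n % 2 = 1 → ‖ghm π q n v‖ = ‖v‖ * (‖π‖^((n+1)/2))⁻¹) := by
  have haa : (‖π‖:ℝ) ≠ 0 := ne_of_gt ha0
  intro n
  induction n using Nat.strong_induction_on with
  | _ n IH =>
  match n, IH with
  | 0, _ =>
    intro τ v hreg
    constructor
    · intro _
      have hv : valGP ‖π‖ q τ 0 ‖v‖ = 1 := by
        unfold valGP; rw [if_pos (Nat.zero_le τ)]; simp [myQ]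
      rw [hv, ghm_zero, norm_one]
    · intro _ h1; omega
  | 1, _ =>
    intro τ v hreg
    have hnorm : ‖ghm π q 1 v‖ = ‖v‖ * ‖π‖⁻¹ := by rw [ghm_one, norm_div]; ring
    constructor
    · intro hpar
      have hτ : 1 ≤ τ := by omega
      unfold valGP; rw [if_pos hτ, hnorm]
      simp [myQ]
    · intro _ _
      rw [hnorm]
      norm_num
  | (n+2), IH =>
    intro τ v hreg
    obtain ⟨hr0, hr1, hru, hrl⟩ := hreg
    have hreg' : Regio ‖π‖ q τ ‖v‖ := ⟨hr0, hr1, hru, hrl⟩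
    have hrq : ‖v^q‖ = ‖v‖^q := norm_pow _ _
    have hrq2 : ‖v^(q^2)‖ = (‖v‖^q)^q := by
      rw [norm_pow, pow_two, pow_mul]
    have hR1 : Regio ‖π‖ q (τ-1) (‖v‖^q) := Regio_down' hq2 hreg'
    have hR2 : Regio ‖π‖ q (τ-1-1) ((‖v‖^q)^q) := Regio_down' hq2 hR1
    have IH1 := IH (n+1) (by omega) (τ-1) (v^q) (by rw [hrq]; exact hR1)
    have IH0 := IH n (by omega) (τ-1-1) (v^(q^2)) (by rw [hrq2]; exact hR2)
    rw [hrq] at IH1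
    rw [hrq2] at IH0
    have hrpos : (0:ℝ) < ‖v‖ := hr0
    have hrqpos : (0:ℝ) < ‖v‖^q := by positivity
    constructor
    · -- main parity part
      intro hpar
      rcases Nat.lt_or_ge τ 1 with hτ0 | hτ1
      · -- case [A] : τ = 0, n+2 even
        have hτ : τ = 0 := by omega
        subst hτ
        have hne : n % 2 = 0 := by omega
        have hX : ‖ghm π q (n+1) (v^q)‖ = ‖v‖^q * (‖π‖^((n+2)/2))⁻¹ := by
          have := IH1.2 rfl (by omega)
          rwa [show (n+1+1)/2 = (n+2)/2 from rfl] at this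
        have hY : ‖ghm π q n (v^(q^2))‖ = (‖π‖^(n/2))⁻¹ := by
          have := IH0.1 (by omega)
          rwa [valGP_zero] at this
        have hP : (0:ℝ) < ‖π‖⁻¹ * (‖π‖^(n/2))⁻¹ := by positivity
        have hdom : ‖v‖ * ‖π‖⁻¹ * (‖v‖^q * (‖π‖^((n+2)/2))⁻¹)
            < ‖π‖⁻¹ * (‖π‖^(n/2))⁻¹ := by
          have e1 : ‖v‖ * ‖π‖⁻¹ * (‖v‖^q * (‖π‖^((n+2)/2))⁻¹)
              = ‖v‖^(1+q) * ‖π‖⁻¹ * (‖π‖⁻¹ * (‖π‖^(n/2))⁻¹) := by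
            rw [show (n+2)/2 = n/2 + 1 by omega, pow_succ, mul_inv, pow_add, pow_one]
            ring
          rw [e1]
          apply dom_helper1 ha0 hP _ (by positivity)
          have : ‖v‖^(q^(0+1)+q^0) = ‖v‖^(1+q) := by congr 1; simp; omega
          rw [← this]; exact hru
        rw [ghm_step_right v n hX hY hdom, valGP_zero]
        rw [show (n+2)/2 = n/2 + 1 by omega, pow_succ, mul_inv]
        ring
      · rcases Nat.lt_or_ge τ 2 with hτ2 | hτ2
        · -- case [C] : τ = 1, n+2 odd
          have hτ : τ = 1 := by omega
          subst hτ
          have hno : n % 2 = 1 := by omega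
          have hX : ‖ghm π q (n+1) (v^q)‖ = (‖π‖^((n+1)/2))⁻¹ := by
            have := IH1.1 (by omega)
            rwa [valGP_zero] at this
          have hY : ‖ghm π q n (v^(q^2))‖ = (‖v‖^q)^q * (‖π‖^((n+1)/2))⁻¹ := by
            exact IH0.2 rfl hno
          have hP : (0:ℝ) < ‖π‖⁻¹ * (‖π‖^((n+1)/2))⁻¹ := by positivity
          have hdom : ‖π‖⁻¹ * ((‖v‖^q)^q * (‖π‖^((n+1)/2))⁻¹)
              < ‖v‖ * ‖π‖⁻¹ * (‖π‖^((n+1)/2))⁻¹ := by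
            have e1 : ‖π‖⁻¹ * ((‖v‖^q)^q * (‖π‖^((n+1)/2))⁻¹)
                = (‖v‖^q)^q * (‖π‖⁻¹ * (‖π‖^((n+1)/2))⁻¹) := by ring
            have e2 : ‖v‖ * ‖π‖⁻¹ * (‖π‖^((n+1)/2))⁻¹
                = ‖v‖ * (‖π‖⁻¹ * (‖π‖^((n+1)/2))⁻¹) := by ring
            rw [e1, e2]
            apply mul_lt_mul_of_pos_right _ hP
            calc (‖v‖^q)^q = ‖v‖^(q*q) := by rw [pow_mul]
              _ < ‖v‖^1 := pow_lt_pow_right_of_lt_one₀ hr0 hr1 (by nlinarith)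
              _ = ‖v‖ := pow_one _
          rw [ghm_step_left v n hX hY hdom, valGP_one _ (by omega)]
          rw [show (n+2+1)/2 = (n+1)/2 + 1 by omega, pow_succ, mul_inv]
          simp [myQ]
          ring
        · -- case [D] : τ ≥ 2
          have hpar1 : (n+1) % 2 = (τ-1) % 2 := by omega
          have hpar0 : n % 2 = (τ-1-1) % 2 := by omega
          have hX := IH1.1 hpar1
          have hY := IH0.1 hpar0
          have halt : ‖π‖ < ‖v‖^(1+q) := Regio_a_lt hq2 ha0 hτ2 hreg'
          rcases le_or_gt (n+2) τ with hsm | hlg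
          · -- small branch
            rw [valGP, if_pos (show n+1 ≤ τ-1 by omega)] at hX
            rw [valGP, if_pos (show n ≤ τ-1-1 by omega)] at hY
            have hP : (0:ℝ) < ((‖v‖^q)^q)^(myQ q n) * (‖π‖^n)⁻¹ * ‖π‖⁻¹ := by positivity
            have hdom : ‖π‖⁻¹ * (((‖v‖^q)^q)^(myQ q n) * (‖π‖^n)⁻¹)
                < ‖v‖ * ‖π‖⁻¹ * ((‖v‖^q)^(myQ q (n+1)) * (‖π‖^(n+1))⁻¹) := by
              have e1 : ‖π‖⁻¹ * (((‖v‖^q)^q)^(myQ q n) * (‖π‖^n)⁻¹)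
                  = ((‖v‖^q)^q)^(myQ q n) * (‖π‖^n)⁻¹ * ‖π‖⁻¹ := by ring
              have e2 : ‖v‖ * ‖π‖⁻¹ * ((‖v‖^q)^(myQ q (n+1)) * (‖π‖^(n+1))⁻¹)
                  = ‖v‖^(1+q) * ‖π‖⁻¹ * (((‖v‖^q)^q)^(myQ q n) * (‖π‖^n)⁻¹ * ‖π‖⁻¹) := by
                rw [show myQ q (n+1) = 1 + q * myQ q n from rfl]
                rw [show ((‖v‖:ℝ)^q)^(1 + q*myQ q n) = ‖v‖^q * ((‖v‖^q)^q)^(myQ q n) from by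
                  rw [pow_split1, pow_mul]]
                rw [show ((‖π‖:ℝ)^(n+1))⁻¹ = (‖π‖^n)⁻¹ * ‖π‖⁻¹ from inv_succ _ n]
                rw [pow_split1]
                ring
              rw [e1, e2]
              exact dom_helper3 ha0 hP halt
            rw [ghm_step_left v n hX hY hdom]
            rw [valGP, if_pos hsm]
            rw [show myQ q (n+2) = 1 + q * myQ q (n+1) from rfl]
            rw [show ((‖π‖:ℝ)^(n+2))⁻¹ = (‖π‖^(n+1))⁻¹ * ‖π‖⁻¹ from inv_succ _ (n+1)]
            rw [pow_split1, pow_mul]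
            ring
          · -- large branch
            have hnτ : τ ≤ n := by omega
            rw [valGP, if_neg (show ¬ (n+1 ≤ τ-1) by omega)] at hX
            rw [valGP, if_neg (show ¬ (n ≤ τ-1-1) by omega)] at hY
            have hJ1 : (n+1+(τ-1))/2 = (n+τ)/2 := by omega
            have hJ2 : (n+(τ-1-1))/2 + 1 = (n+τ)/2 := by omega
            have hJ3 : (n+2+τ)/2 = (n+τ)/2 + 1 := by omega
            rw [hJ1] at hX
            have hstep : ((‖π‖:ℝ)^((n+(τ-1-1))/2))⁻¹
                = (‖π‖^((n+τ)/2))⁻¹ * ‖π‖ := by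
              rw [← hJ2, pow_succ, mul_inv]
              field_simp
            have hY' : ‖ghm π q n (v^(q^2))‖
                = ((‖v‖^q)^q)^(myQ q (τ-1-1)) * ((‖π‖^((n+τ)/2))⁻¹ * ‖π‖) := by
              rw [hY, hstep]
            have hP : (0:ℝ) < ((‖v‖^q)^q)^(myQ q (τ-1-1)) * (‖π‖^((n+τ)/2))⁻¹ := by
              positivity
            have hdom : ‖π‖⁻¹ * (((‖v‖^q)^q)^(myQ q (τ-1-1)) * ((‖π‖^((n+τ)/2))⁻¹ * ‖π‖))
                < ‖v‖ * ‖π‖⁻¹ * ((‖v‖^q)^(myQ q (τ-1)) * (‖π‖^((n+τ)/2))⁻¹) := by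
              have e1 : ‖π‖⁻¹ * (((‖v‖^q)^q)^(myQ q (τ-1-1)) * ((‖π‖^((n+τ)/2))⁻¹ * ‖π‖))
                  = ((‖v‖^q)^q)^(myQ q (τ-1-1)) * (‖π‖^((n+τ)/2))⁻¹ := by
                field_simp
              have e2 : ‖v‖ * ‖π‖⁻¹ * ((‖v‖^q)^(myQ q (τ-1)) * (‖π‖^((n+τ)/2))⁻¹)
                  = ‖v‖^(1+q) * ‖π‖⁻¹
                    * (((‖v‖^q)^q)^(myQ q (τ-1-1)) * (‖π‖^((n+τ)/2))⁻¹) := by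
                rw [show myQ q (τ-1) = 1 + q * myQ q (τ-1-1) by
                  rw [show τ-1 = (τ-1-1)+1 by omega]; rfl]
                rw [show ((‖v‖:ℝ)^q)^(1 + q*myQ q (τ-1-1))
                    = ‖v‖^q * ((‖v‖^q)^q)^(myQ q (τ-1-1)) from by
                  rw [pow_split1, pow_mul]]
                rw [pow_split1]
                ring
              rw [e1, e2]
              exact dom_helper3 ha0 hP halt
            rw [ghm_step_left v n hX hY' hdom]
            rw [valGP, if_neg (show ¬ (n+2 ≤ τ) by omega), hJ3]
            rw [show myQ q τ = 1 + q * myQ q (τ-1) by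
              rw [show τ = (τ-1)+1 by omega]; rfl]
            rw [show ((‖π‖:ℝ)^((n+τ)/2+1))⁻¹ = (‖π‖^((n+τ)/2))⁻¹ * ‖π‖⁻¹ from
              inv_succ _ ((n+τ)/2)]
            rw [pow_split1, pow_mul]
            ring
    · -- deep odd part [B]
      intro hτ0 hodd
      subst hτ0
      have hno : n % 2 = 1 := by omega
      have hX : ‖ghm π q (n+1) (v^q)‖ = (‖π‖^((n+1)/2))⁻¹ := by
        have := IH1.1 (by omega)
        rwa [valGP_zero, show (n+1)/2 = (n+1)/2 from rfl] at this
      have hY : ‖ghm π q n (v^(q^2))‖ = (‖v‖^q)^q * (‖π‖^((n+1)/2))⁻¹ :=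
        IH0.2 rfl hno
      have hP : (0:ℝ) < ‖π‖⁻¹ * (‖π‖^((n+1)/2))⁻¹ := by positivity
      have hdom : ‖π‖⁻¹ * ((‖v‖^q)^q * (‖π‖^((n+1)/2))⁻¹)
          < ‖v‖ * ‖π‖⁻¹ * (‖π‖^((n+1)/2))⁻¹ := by
        have e1 : ‖π‖⁻¹ * ((‖v‖^q)^q * (‖π‖^((n+1)/2))⁻¹)
            = (‖v‖^q)^q * (‖π‖⁻¹ * (‖π‖^((n+1)/2))⁻¹) := by ring
        have e2 : ‖v‖ * ‖π‖⁻¹ * (‖π‖^((n+1)/2))⁻¹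
            = ‖v‖ * (‖π‖⁻¹ * (‖π‖^((n+1)/2))⁻¹) := by ring
        rw [e1, e2]
        apply mul_lt_mul_of_pos_right _ hP
        calc (‖v‖^q)^q = ‖v‖^(q*q) := by rw [pow_mul]
          _ < ‖v‖^1 := pow_lt_pow_right_of_lt_one₀ hr0 hr1 (by nlinarith)
          _ = ‖v‖ := pow_one _
      rw [ghm_step_left v n hX hY hdom]
      rw [show (n+2+1)/2 = (n+1)/2 + 1 by omega, pow_succ, mul_inv]
      ring

end Annulus

section Conv
variable {C : Type*} [NormedField C] [IsUltrametricDist C] {π : C} {q : ℕ}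

/-- even-index difference -/
noncomputable def ef (π : C) (q k : ℕ) (v : C) : C :=
  π^(k+1) * ghm π q (2*k+2) v - π^k * ghm π q (2*k) v

/-- odd-index difference -/
noncomputable def ff (π : C) (q k : ℕ) (v : C) : C :=
  π^(k+2) * ghm π q (2*k+3) v - π^(k+1) * ghm π q (2*k+1) v

lemma ef_zero (hπ : π ≠ 0) (v : C) : ef π q 0 v = v^(1+q) * π⁻¹ := by
  unfold ef
  show π^1 * ghm π q (0+2) v - π^0 * ghm π q 0 v = _
  rw [ghm_two, ghm_one, ghm_zero, ghm_zero]
  field_simp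
  ring

lemma ff_zero (hπ : π ≠ 0) (v : C) : ff π q 0 v = v^(1+q+q^2) / π + v^(q^2) := by
  unfold ff
  show π^2 * ghm π q (1+2) v - π^1 * ghm π q (2*0+1) v = _
  rw [ghm_two π q 1 v, show (1:ℕ)+1 = 0+2 from rfl, ghm_two π q 0 (v^q),
    ghm_one, ghm_one, ghm_zero, pow_q_sq, show 2*0+1 = 1 from rfl, ghm_one]
  field_simp
  have h6 : (π:C)^6 * π⁻¹^6 = 1 := by
    rw [← mul_pow, mul_inv_cancel₀ hπ, one_pow]
  have h7 : (π:C)^7 * π⁻¹^6 = π := by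
    rw [show (π:C)^7 = π * π^6 by ring, mul_assoc, h6, mul_one]
  ring

lemma ef_rec (hπ : π ≠ 0) (k : ℕ) (v : C) :
    ef π q (k+1) v = v * π⁻¹ * ff π q k (v^q) + ef π q k (v^(q^2)) := by
  unfold ef ff
  rw [show 2*(k+1)+2 = (2*k+2)+2 by ring, show 2*(k+1) = (2*k)+2 by ring,
    ghm_two π q (2*k+2) v, ghm_two π q (2*k) v]
  rw [show (2*k+2)+1 = 2*k+3 by ring, show (2*k)+1 = 2*k+1 by ring]
  field_simp
  ring

lemma ff_rec (hπ : π ≠ 0) (k : ℕ) (v : C) :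
    ff π q (k+1) v = v * ef π q (k+1) (v^q) + ff π q k (v^(q^2)) := by
  unfold ef ff
  rw [show 2*(k+1)+3 = (2*k+3)+2 by ring, show 2*(k+1)+1 = (2*k+1)+2 by ring,
    ghm_two π q (2*k+3) v, ghm_two π q (2*k+1) v]
  rw [show (2*k+3)+1 = 2*(k+1)+2 by ring, show (2*k+1)+1 = 2*(k+1) by ring]
  field_simp
  ring
lemma ef_ff_bound (hq2 : 2 ≤ q) (ha0 : 0 < ‖π‖) (ha1 : ‖π‖ < 1) :
    ∀ k, ∀ v : C, ‖v‖ < 1 →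
      ‖ef π q k v‖ ≤ (‖π‖^(k+1))⁻¹ * ‖v‖^(q^(2*k+1)) ∧
      ‖ff π q k v‖ ≤ (‖π‖^(k+1))⁻¹ * ‖v‖^(q^(2*k+2)) := by
  have hπ : (π : C) ≠ 0 := by
    intro h; rw [h, norm_zero] at ha0; exact lt_irrefl _ ha0
  intro k
  induction k with
  | zero =>
    intro v hv1
    have hv0 : (0:ℝ) ≤ ‖v‖ := norm_nonneg v
    constructor
    · rw [ef_zero hπ, norm_mul, norm_pow, norm_inv]
      calc ‖v‖^(1+q) * ‖π‖⁻¹ ≤ ‖v‖^(q^(2*0+1)) * ‖π‖⁻¹ := by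
            apply mul_le_mul_of_nonneg_right _ (by positivity)
            apply pow_le_pow_of_le_one hv0 hv1.le
            have : q^(2*0+1) = q := by ring
            omega
        _ = (‖π‖^(0+1))⁻¹ * ‖v‖^(q^(2*0+1)) := by rw [pow_one]; ring
    · rw [ff_zero hπ]
      have h1 : ‖v^(1+q+q^2) / π‖ ≤ (‖π‖^(0+1))⁻¹ * ‖v‖^(q^(2*0+2)) := by
        rw [norm_div, norm_pow, div_eq_mul_inv, pow_one]
        calc ‖v‖^(1+q+q^2) * ‖π‖⁻¹ ≤ ‖v‖^(q^(2*0+2)) * ‖π‖⁻¹ := by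
              apply mul_le_mul_of_nonneg_right _ (by positivity)
              apply pow_le_pow_of_le_one hv0 hv1.le
              have : q^(2*0+2) = q^2 := by ring
              omega
          _ = ‖π‖⁻¹ * ‖v‖^(q^(2*0+2)) := by ring
      have h2 : ‖v^(q^2)‖ ≤ (‖π‖^(0+1))⁻¹ * ‖v‖^(q^(2*0+2)) := by
        rw [norm_pow, pow_one]
        calc ‖v‖^(q^2) = 1 * ‖v‖^(q^2) := (one_mul _).symm
          _ ≤ ‖π‖⁻¹ * ‖v‖^(q^2) := by
              apply mul_le_mul_of_nonneg_right _ (by positivity)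
              rw [le_inv_comm₀ one_pos ha0]
              simpa using ha1.le
          _ = ‖π‖⁻¹ * ‖v‖^(q^(2*0+2)) := by norm_num
      exact le_trans (unorm_add_le_max _ _) (max_le h1 h2)
  | succ k IHk =>
    -- first e at k+1 for all v, then f at k+1
    have he : ∀ v : C, ‖v‖ < 1 →
        ‖ef π q (k+1) v‖ ≤ (‖π‖^(k+2))⁻¹ * ‖v‖^(q^(2*(k+1)+1)) := by
      intro v hv1
      have hv0 : (0:ℝ) ≤ ‖v‖ := norm_nonneg v
      have hvq : ‖v^q‖ < 1 := by
        rw [norm_pow]; exact pow_lt_one₀ hv0 hv1 (by omega)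
      have hvq2 : ‖v^(q^2)‖ < 1 := by
        rw [norm_pow]; exact pow_lt_one₀ hv0 hv1 (by positivity)
      have hf := (IHk (v^q) hvq).2
      have he' := (IHk (v^(q^2)) hvq2).1
      rw [norm_pow] at hf he'
      have hexp1 : (‖v‖^q)^(q^(2*k+2)) = ‖v‖^(q^(2*k+3)) := by
        rw [← pow_mul]; congr 1
        ring
      have hexp2 : (‖v‖^(q^2))^(q^(2*k+1)) = ‖v‖^(q^(2*k+3)) := by
        rw [← pow_mul]; congr 1
        ring
      rw [hexp1] at hf
      rw [hexp2] at he'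
      rw [ef_rec hπ]
      have t1 : ‖v * π⁻¹ * ff π q k (v^q)‖ ≤ (‖π‖^(k+2))⁻¹ * ‖v‖^(q^(2*k+3)) := by
        rw [norm_mul, norm_mul, norm_inv]
        calc ‖v‖ * ‖π‖⁻¹ * ‖ff π q k (v^q)‖
            ≤ ‖v‖ * ‖π‖⁻¹ * ((‖π‖^(k+1))⁻¹ * ‖v‖^(q^(2*k+3))) := by
              apply mul_le_mul_of_nonneg_left hf (by positivity)
          _ ≤ 1 * ‖π‖⁻¹ * ((‖π‖^(k+1))⁻¹ * ‖v‖^(q^(2*k+3))) := by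
              apply mul_le_mul_of_nonneg_right _ (by positivity)
              apply mul_le_mul_of_nonneg_right hv1.le (by positivity)
          _ = (‖π‖ * ‖π‖^(k+1))⁻¹ * ‖v‖^(q^(2*k+3)) := by
              rw [mul_inv]; ring
          _ = (‖π‖^(k+2))⁻¹ * ‖v‖^(q^(2*k+3)) := by
              rw [← pow_succ']
      have t2 : ‖ef π q k (v^(q^2))‖ ≤ (‖π‖^(k+2))⁻¹ * ‖v‖^(q^(2*k+3)) := by
        calc ‖ef π q k (v^(q^2))‖ ≤ (‖π‖^(k+1))⁻¹ * ‖v‖^(q^(2*k+3)) := he'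
          _ ≤ (‖π‖^(k+2))⁻¹ * ‖v‖^(q^(2*k+3)) := by
              apply mul_le_mul_of_nonneg_right _ (by positivity)
              apply inv_anti₀ (by positivity)
              calc ‖π‖^(k+2) = ‖π‖^(k+1) * ‖π‖ := by rw [pow_succ]
                _ ≤ ‖π‖^(k+1) * 1 := by
                    apply mul_le_mul_of_nonneg_left ha1.le (by positivity)
                _ = ‖π‖^(k+1) := mul_one _
      have : (2*(k+1)+1) = 2*k+3 := by ring
      rw [this]
      exact le_trans (unorm_add_le_max _ _) (max_le t1 t2)
    intro v hv1
    refine ⟨he v hv1, ?_⟩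
    · have hv0 : (0:ℝ) ≤ ‖v‖ := norm_nonneg v
      have hvq : ‖v^q‖ < 1 := by
        rw [norm_pow]; exact pow_lt_one₀ hv0 hv1 (by omega)
      have hvq2 : ‖v^(q^2)‖ < 1 := by
        rw [norm_pow]; exact pow_lt_one₀ hv0 hv1 (by positivity)
      have hee := he (v^q) hvq
      have hff := (IHk (v^(q^2)) hvq2).2
      rw [norm_pow] at hee hff
      have hexp1 : (‖v‖^q)^(q^(2*(k+1)+1)) = ‖v‖^(q^(2*k+4)) := by
        rw [← pow_mul]; congr 1
        ring
      have hexp2 : (‖v‖^(q^2))^(q^(2*k+2)) = ‖v‖^(q^(2*k+4)) := by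
        rw [← pow_mul]; congr 1
        ring
      rw [hexp1] at hee
      rw [hexp2] at hff
      rw [ff_rec hπ]
      have t1 : ‖v * ef π q (k+1) (v^q)‖ ≤ (‖π‖^(k+2))⁻¹ * ‖v‖^(q^(2*k+4)) := by
        rw [norm_mul]
        calc ‖v‖ * ‖ef π q (k+1) (v^q)‖
            ≤ ‖v‖ * ((‖π‖^(k+2))⁻¹ * ‖v‖^(q^(2*k+4))) := by
              apply mul_le_mul_of_nonneg_left hee (norm_nonneg v)
          _ ≤ 1 * ((‖π‖^(k+2))⁻¹ * ‖v‖^(q^(2*k+4))) := by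
              apply mul_le_mul_of_nonneg_right hv1.le (by positivity)
          _ = (‖π‖^(k+2))⁻¹ * ‖v‖^(q^(2*k+4)) := one_mul _
      have t2 : ‖ff π q k (v^(q^2))‖ ≤ (‖π‖^(k+2))⁻¹ * ‖v‖^(q^(2*k+4)) := by
        calc ‖ff π q k (v^(q^2))‖ ≤ (‖π‖^(k+1))⁻¹ * ‖v‖^(q^(2*k+4)) := hff
          _ ≤ (‖π‖^(k+2))⁻¹ * ‖v‖^(q^(2*k+4)) := by
              apply mul_le_mul_of_nonneg_right _ (by positivity)
              apply inv_anti₀ (by positivity)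
              calc ‖π‖^(k+2) = ‖π‖^(k+1) * ‖π‖ := by rw [pow_succ]
                _ ≤ ‖π‖^(k+1) * 1 := by
                    apply mul_le_mul_of_nonneg_left ha1.le (by positivity)
                _ = ‖π‖^(k+1) := mul_one _
      have : (2*(k+1)+2) = 2*k+4 := by ring
      rw [this]
      exact le_trans (unorm_add_le_max _ _) (max_le t1 t2)

/-- the geometric domination of the difference bounds -/
lemma geo_bound (hq2 : 2 ≤ q) {a r : ℝ} (ha0 : 0 < a) (ha1 : a < 1)
    (hr0 : 0 ≤ r) (hr1 : r < 1) :
    ∃ K : ℕ, ∀ k ≥ K, (a^(k+1))⁻¹ * r^(q^(2*k+1)) ≤ (1/2)^(k+1) := by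
  obtain ⟨T, hT⟩ : ∃ T : ℕ, r^T < a/2 := exists_pow_lt_of_lt_one (by positivity) hr1
  refine ⟨T, fun k hk => ?_⟩
  have hTk : T * (k+1) ≤ q^(2*k+1) := by
    have h1 : 2^(2*k+1) ≤ q^(2*k+1) := Nat.pow_le_pow_left hq2 _
    have h2 : 2^(2*k+1) = 2^(k+1) * 2^k := by rw [← pow_add]; congr 1; omega
    have h3 : k + 1 ≤ 2^k := Nat.lt_two_pow_self (n := k)
    have h4 : T ≤ 2^(k+1) := by
      have := Nat.lt_two_pow_self (n := k+1)
      omega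
    calc T * (k+1) ≤ 2^(k+1) * 2^k := Nat.mul_le_mul h4 h3
      _ = 2^(2*k+1) := h2.symm
      _ ≤ q^(2*k+1) := h1
  have hstep : r^(q^(2*k+1)) ≤ (r^T)^(k+1) := by
    rw [← pow_mul]
    exact pow_le_pow_of_le_one hr0 hr1.le hTk
  calc (a^(k+1))⁻¹ * r^(q^(2*k+1)) ≤ (a^(k+1))⁻¹ * (r^T)^(k+1) := by
        apply mul_le_mul_of_nonneg_left hstep (by positivity)
    _ = (r^T / a)^(k+1) := by
        rw [div_pow, div_eq_mul_inv]; ring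
    _ ≤ (1/2)^(k+1) := by
        apply pow_le_pow_left₀ (by positivity)
        rw [div_le_div_iff₀ ha0 (by norm_num)]
        nlinarith
end Conv

open Topology

section Lim
variable {C : Type*} [NormedField C] [IsUltrametricDist C] [CompleteSpace C] {π : C} {q : ℕ}

lemma lim_exists {x : ℕ → C} (b : ℕ → ℝ) (hb : ∀ k, ‖x (k+1) - x k‖ ≤ b k) {K : ℕ}
    (hgeo : ∀ k ≥ K, b k ≤ (1/2)^(k+1)) : ∃ L, Tendsto x atTop (𝓝 L) := by
  apply cauchySeq_tendsto_of_complete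
  rw [Metric.cauchySeq_iff']
  intro ε hε
  obtain ⟨n0, hn0⟩ : ∃ n0 : ℕ, ((1:ℝ)/2)^n0 < ε :=
    exists_pow_lt_of_lt_one hε (by norm_num)
  refine ⟨max K n0, fun n hn => ?_⟩
  set N := max K n0 with hN
  have aux : ∀ j, dist (x (N+j)) (x N) ≤ (1/2)^(N+1) := by
    intro j
    induction j with
    | zero => simp only [Nat.add_zero, dist_self]; positivity
    | succ j IHj =>
        have h1 : dist (x (N+j+1)) (x (N+j)) ≤ (1/2)^(N+1) := by
          rw [dist_eq_norm]
          calc ‖x (N+j+1) - x (N+j)‖ ≤ b (N+j) := hb (N+j)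
            _ ≤ (1/2)^(N+j+1) := hgeo (N+j) (by omega)
            _ ≤ (1/2)^(N+1) := by
                apply pow_le_pow_of_le_one (by norm_num) (by norm_num)
                omega
        calc dist (x (N+(j+1))) (x N)
            ≤ max (dist (x (N+j+1)) (x (N+j))) (dist (x (N+j)) (x N)) := by
              rw [show N+(j+1) = N+j+1 by omega]
              exact IsUltrametricDist.dist_triangle_max _ _ _
          _ ≤ (1/2)^(N+1) := max_le h1 IHj
  have := aux (n - N)
  rw [show N + (n - N) = n by omega] at this
  calc dist (x n) (x N) ≤ (1/2)^(N+1) := this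
    _ ≤ (1/2)^n0 := by
        apply pow_le_pow_of_le_one (by norm_num) (by norm_num)
        have := le_max_right K n0
        omega
    _ < ε := hn0

lemma phi0_spec (hq2 : 2 ≤ q) (ha0 : 0 < ‖π‖) (ha1 : ‖π‖ < 1) (v : C)
    (hv1 : ‖v‖ < 1) :
    ∃ L, Tendsto (fun k => π^k * ghm π q (2*k) v) atTop (𝓝 L) := by
  obtain ⟨K, hK⟩ := geo_bound (a := ‖π‖) (r := ‖v‖) hq2 ha0 ha1 (norm_nonneg v) hv1
  apply lim_exists (fun k => (‖π‖^(k+1))⁻¹ * ‖v‖^(q^(2*k+1))) _ hK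
  intro k
  have : π^(k+1) * ghm π q (2*(k+1)) v - π^k * ghm π q (2*k) v = ef π q k v := by
    unfold ef; rw [show 2*(k+1) = 2*k+2 by ring]
  rw [this]
  exact (ef_ff_bound hq2 ha0 ha1 k v hv1).1

lemma phi1_spec (hq2 : 2 ≤ q) (ha0 : 0 < ‖π‖) (ha1 : ‖π‖ < 1) (v : C)
    (hv1 : ‖v‖ < 1) :
    ∃ L, Tendsto (fun k => π^(k+1) * ghm π q (2*k+1) v) atTop (𝓝 L) := by
  obtain ⟨K, hK⟩ := geo_bound (a := ‖π‖) (r := ‖v‖) hq2 ha0 ha1 (norm_nonneg v) hv1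
  apply lim_exists (fun k => (‖π‖^(k+1))⁻¹ * ‖v‖^(q^(2*k+1))) _ hK
  intro k
  have : π^(k+1+1) * ghm π q (2*(k+1)+1) v - π^(k+1) * ghm π q (2*k+1) v = ff π q k v := by
    unfold ff; rw [show 2*(k+1)+1 = 2*k+3 by ring]
  rw [this]
  calc ‖ff π q k v‖ ≤ (‖π‖^(k+1))⁻¹ * ‖v‖^(q^(2*k+2)) := (ef_ff_bound hq2 ha0 ha1 k v hv1).2
    _ ≤ (‖π‖^(k+1))⁻¹ * ‖v‖^(q^(2*k+1)) := by
        apply mul_le_mul_of_nonneg_left _ (by positivity)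
        apply pow_le_pow_of_le_one (norm_nonneg v) hv1.le
        apply Nat.pow_le_pow_right (by omega)
        omega

lemma Xf_antisymm (π : C) (q n : ℕ) (v w : C) : Xf π q n v w = - Xf π q n w v := by
  unfold Xf; ring

end Lim

theorem period_map_image_derivative {p : ℕ} [Fact p.Prime] {C : Type*} [NormedField C] [IsUltrametricDist C]
    [CompleteSpace C] [IsAlgClosed C] [Algebra ℚ_[p] C]
    (hiso : ∀ x : ℚ_[p], ‖algebraMap ℚ_[p] C x‖ = ‖x‖)
    (K : IntermediateField ℚ_[p] C) (hKfin : FiniteDimensional ℚ_[p] K)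
    (q : ℕ) (hq : ∃ r : ℕ, 0 < r ∧ q = p ^ r)
    (π : C) (hπK : π ∈ K) (hπ0 : 0 < ‖π‖) (hπ1 : ‖π‖ < 1)
    (hπunif : ∀ x ∈ K, ‖x‖ < 1 → ‖x‖ ≤ ‖π‖)
    (hres : ∃ S : Finset C, S.card = q ∧ (∀ s ∈ S, s ∈ K ∧ ‖s‖ ≤ 1) ∧
      (∀ x ∈ K, ‖x‖ ≤ 1 → ∃ s ∈ S, ‖x - s‖ < 1) ∧
      (∀ s ∈ S, ∀ t ∈ S, s ≠ t → ‖s - t‖ = 1))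
    (s : ℕ) (hs : Odd s) (hs1 : 1 ≤ s)
    (γ : ℝ) (h1 : ‖π‖ ^ ((1:ℝ)/((q:ℝ)^s + (q:ℝ)^(s-1))) < γ)
    (h2 : γ < ‖π‖ ^ ((1:ℝ)/((q:ℝ)^(s+2) + (q:ℝ)^(s+1))))
    (u0 : C) (hu0 : ‖u0‖ = γ) :
    ∀ u : C, ‖u - u0‖ < (‖π‖ * γ ^ (-(2:ℝ))) ^ ((1:ℝ)/((q:ℝ)-1)) →
      ghphi0 π q u ≠ 0 ∧ ghphi0 π q u0 ≠ 0 ∧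
      ‖ghphi1 π q u / ghphi0 π q u - ghphi1 π q u0 / ghphi0 π q u0‖ =
        ‖π‖ ^ (s+1) * γ ^ (-(2:ℝ) * ∑ i ∈ Finset.range (s+1), (q:ℝ)^i) * ‖u - u0‖ := by
  intro u hu
  obtain ⟨rr, hrr, hqp⟩ := hq
  have hp2 : 2 ≤ p := (Fact.out : p.Prime).two_le
  have hq2 : 2 ≤ q := by
    rw [hqp]
    calc 2 = 2^1 := (pow_one 2).symm
      _ ≤ p^1 := Nat.pow_le_pow_left hp2 1
      _ ≤ p^rr := Nat.pow_le_pow_right (by omega) hrr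
  have hπ : π ≠ 0 := by intro h; rw [h, norm_zero] at hπ0; exact lt_irrefl _ hπ0
  have haa : ‖π‖ ≠ 0 := ne_of_gt hπ0
  -- the binomial coefficient norm bound
  have hpCeq : ‖((p:ℕ) : C)‖ = ‖((p:ℕ) : ℚ_[p])‖ := by
    rw [← map_natCast (algebraMap ℚ_[p] C) p, hiso]
  have hpC : ‖((p:ℕ) : C)‖ ≤ ‖π‖ := by
    apply hπunif
    · rw [← map_natCast (algebraMap ℚ_[p] C) p]
      exact IntermediateField.algebraMap_mem K _
    · rw [hpCeq]
      rw [Padic.norm_p]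
      rw [inv_lt_one₀ (by exact_mod_cast (by omega : 0 < p))]
      exact_mod_cast (by omega : 1 < p)
  have hch : ∀ i, 0 < i → i < q → ‖((q.choose i : ℕ) : C)‖ ≤ ‖π‖ := by
    intro i hi0 hiq
    have hdvd : p ∣ q.choose i := by
      rw [hqp]
      exact (Fact.out : p.Prime).dvd_choose_pow (by omega) (by rw [← hqp]; omega)
    obtain ⟨m, hm⟩ := hdvd
    have e1 : ((q.choose i : ℕ) : C) = algebraMap ℚ_[p] C ((q.choose i : ℕ) : ℚ_[p]) :=
      (map_natCast _ _).symm
    rw [e1, hiso, hm]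
    push_cast
    rw [norm_mul]
    calc ‖((p:ℕ):ℚ_[p])‖ * ‖((m:ℕ):ℚ_[p])‖ ≤ ‖((p:ℕ):ℚ_[p])‖ * 1 := by
          apply mul_le_mul_of_nonneg_left _ (norm_nonneg _)
          exact_mod_cast Padic.norm_int_le_one (m : ℤ)
      _ = ‖((p:ℕ):C)‖ := by rw [mul_one, hpCeq]
      _ ≤ ‖π‖ := hpC
  -- gamma basics
  have hγ0 : 0 < γ := lt_trans (Real.rpow_pos_of_pos hπ0 _) h1
  have hγ1 : γ < 1 := lt_trans h2 (Real.rpow_lt_one hπ0.le hπ1 (by positivity))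
  -- hypothesis conversion
  have hsodd : s % 2 = 1 := Nat.odd_iff.mp hs
  have hA1 : ‖π‖ < γ^(q^s + q^(s-1)) := by
    have hX0 : (0:ℝ) < (q:ℝ)^s + (q:ℝ)^(s-1) := by positivity
    have he : (‖π‖ ^ ((1:ℝ)/((q:ℝ)^s + (q:ℝ)^(s-1))))^(q^s + q^(s-1) : ℕ) = ‖π‖ := by
      rw [← Real.rpow_natCast (‖π‖ ^ ((1:ℝ)/((q:ℝ)^s + (q:ℝ)^(s-1)))) (q^s + q^(s-1)),
        ← Real.rpow_mul hπ0.le]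
      have e2 : ((q^s + q^(s-1) : ℕ) : ℝ) = (q:ℝ)^s + (q:ℝ)^(s-1) := by push_cast; ring
      rw [e2, one_div, inv_mul_cancel₀ (ne_of_gt hX0), Real.rpow_one]
    calc ‖π‖ = (‖π‖ ^ ((1:ℝ)/((q:ℝ)^s + (q:ℝ)^(s-1))))^(q^s + q^(s-1) : ℕ) := he.symm
      _ < γ^(q^s + q^(s-1)) := by
          apply pow_lt_pow_left₀ h1 (Real.rpow_nonneg hπ0.le _)
          positivity
  have hA2 : γ^(q^(s+2) + q^(s+1)) < ‖π‖ := by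
    have hX0 : (0:ℝ) < (q:ℝ)^(s+2) + (q:ℝ)^(s+1) := by positivity
    have he : (‖π‖ ^ ((1:ℝ)/((q:ℝ)^(s+2) + (q:ℝ)^(s+1))))^(q^(s+2) + q^(s+1) : ℕ) = ‖π‖ := by
      rw [← Real.rpow_natCast (‖π‖ ^ ((1:ℝ)/((q:ℝ)^(s+2) + (q:ℝ)^(s+1)))) (q^(s+2) + q^(s+1)),
        ← Real.rpow_mul hπ0.le]
      have e2 : ((q^(s+2) + q^(s+1) : ℕ) : ℝ) = (q:ℝ)^(s+2) + (q:ℝ)^(s+1) := by push_cast; ring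
      rw [e2, one_div, inv_mul_cancel₀ (ne_of_gt hX0), Real.rpow_one]
    calc γ^(q^(s+2) + q^(s+1)) < (‖π‖ ^ ((1:ℝ)/((q:ℝ)^(s+2) + (q:ℝ)^(s+1))))^(q^(s+2) + q^(s+1) : ℕ) := by
          apply pow_lt_pow_left₀ h2 hγ0.le
          positivity
      _ = ‖π‖ := he
  -- the region for radius γ
  have hreg0 : Regio ‖π‖ q (s+1) γ := by
    refine ⟨hγ0, hγ1, ?_, fun _ => ?_⟩
    · exact hA2
    · have h4 : ‖π‖^q < (γ^(q^s + q^(s-1)))^q := by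
        apply pow_lt_pow_left₀ hA1 hπ0.le
        omega
      calc ‖π‖^q < (γ^(q^s + q^(s-1)))^q := h4
        _ = γ^(q^(s+1) + q^(s+1-1)) := by
            rw [← pow_mul]
            congr 1
            have e1 : q^s * q = q^(s+1) := by rw [pow_succ]
            have e2 : q^(s-1) * q = q^s := by
              rw [← pow_succ]
              congr 1
              omega
            have e3 : s+1-1 = s := by omega
            rw [e3, add_mul, e1, e2]
  have haγ : ‖π‖ < γ^(q+1) := by
    calc ‖π‖ < γ^(q^s + q^(s-1)) := hA1
      _ ≤ γ^(q+1) := by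
          apply pow_le_pow_of_le_one hγ0.le hγ1.le
          have e1 : q ≤ q^s := Nat.le_self_pow (by omega) q
          have e2 : 1 ≤ q^(s-1) := Nat.one_le_pow _ _ (by omega)
          omega
  -- the radius hypothesis
  have hεconv : ‖u - u0‖^(q-1) * γ^2 < ‖π‖ := by
    have hb0 : (0:ℝ) < ‖π‖ * γ^(-(2:ℝ)) := mul_pos hπ0 (Real.rpow_pos_of_pos hγ0 _)
    have h1' : ‖u - u0‖^(q-1) < ((‖π‖ * γ^(-(2:ℝ)))^((1:ℝ)/((q:ℝ)-1)))^(q-1) :=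
      pow_lt_pow_left₀ hu (norm_nonneg _) (by omega)
    have hq1R : ((q-1:ℕ):ℝ) = (q:ℝ)-1 := by
      push_cast [Nat.cast_sub (by omega : 1 ≤ q)]
      ring
    have hq1ne : ((q:ℝ)-1) ≠ 0 := by
      have : (2:ℝ) ≤ (q:ℝ) := by exact_mod_cast hq2
      linarith
    have he : ((‖π‖ * γ^(-(2:ℝ)))^((1:ℝ)/((q:ℝ)-1)))^(q-1) = ‖π‖ * γ^(-(2:ℝ)) := by
      rw [← Real.rpow_natCast ((‖π‖ * γ^(-(2:ℝ)))^((1:ℝ)/((q:ℝ)-1))) (q-1),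
        ← Real.rpow_mul hb0.le, hq1R, one_div, inv_mul_cancel₀ hq1ne, Real.rpow_one]
    rw [he] at h1'
    have e2 : ‖π‖ * γ^(-(2:ℝ)) = ‖π‖ * (γ^(2:ℕ))⁻¹ := by
      rw [show (-(2:ℝ)) = -((2:ℕ):ℝ) by norm_num, Real.rpow_neg hγ0.le, Real.rpow_natCast]
    rw [e2] at h1'
    calc ‖u - u0‖^(q-1) * γ^2 < (‖π‖ * (γ^(2:ℕ))⁻¹) * γ^2 :=
          mul_lt_mul_of_pos_right h1' (by positivity)
      _ = ‖π‖ := by field_simp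
  have hεγ : ‖u - u0‖ < γ := by
    have h3 : ‖u - u0‖^(q-1) < γ^(q-1) := by
      have h4 : ‖u - u0‖^(q-1) * γ^2 < γ^(q-1) * γ^2 := by
        calc ‖u - u0‖^(q-1) * γ^2 < ‖π‖ := hεconv
          _ < γ^(q+1) := haγ
          _ = γ^(q-1) * γ^2 := by rw [← pow_add]; congr 1; omega
      exact lt_of_mul_lt_mul_right h4 (by positivity)
    exact lt_of_pow_lt_pow_left₀ (q-1) hγ0.le h3
  have huu0 : ‖u0 - u‖ = ‖u - u0‖ := norm_sub_rev u0 u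
  have hGood : Good π q u0 u := by
    refine ⟨by rw [hu0]; exact hγ0, by rw [hu0]; exact hγ1, ?_, ?_⟩
    · rw [hu0, huu0]; exact hεγ
    · rw [hu0, huu0]; exact hεconv
  have hunorm : ‖u‖ = γ := by
    have := unorm_eq_of_sub_lt (v := u0) (w := u) (by rw [huu0, hu0]; exact hεγ)
    rw [hu0] at this; exact this
  -- limits
  have hu1 : ‖u‖ < 1 := by rw [hunorm]; exact hγ1
  have hu01 : ‖u0‖ < 1 := by rw [hu0]; exact hγ1
  obtain ⟨L0u, hL0u⟩ := phi0_spec hq2 hπ0 hπ1 u hu1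
  obtain ⟨L0v, hL0v⟩ := phi0_spec hq2 hπ0 hπ1 u0 hu01
  obtain ⟨L1u, hL1u⟩ := phi1_spec hq2 hπ0 hπ1 u hu1
  obtain ⟨L1v, hL1v⟩ := phi1_spec hq2 hπ0 hπ1 u0 hu01
  have hphi0u : ghphi0 π q u = L0u := hL0u.limUnder_eq
  have hphi0v : ghphi0 π q u0 = L0v := hL0v.limUnder_eq
  have hphi1u : ghphi1 π q u = L1u := hL1u.limUnder_eq
  have hphi1v : ghphi1 π q u0 = L1v := hL1v.limUnder_eq
  -- norm of the even limits
  set F0 : ℝ := γ^(myQ q (s+1)) * (‖π‖^((s+1)/2))⁻¹ with hF0def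
  have hF0pos : 0 < F0 := by positivity
  have hnormseq : ∀ w : C, ‖w‖ = γ → ∀ k, k ≥ s+1 → ‖π^k * ghm π q (2*k) w‖ = F0 := by
    intro w hw k hk
    have hregw : Regio ‖π‖ q (s+1) ‖w‖ := by rw [hw]; exact hreg0
    have hval := (annulus hq2 hπ0 hπ1 (2*k) (s+1) w hregw).1 (by omega)
    rw [norm_mul, norm_pow, hval, valGP, if_neg (by omega : ¬ (2*k ≤ s+1)), hw]
    have he : (2*k+(s+1))/2 = k + (s+1)/2 := by omega
    rw [he, pow_add, mul_inv, hF0def]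
    have hπk : (‖π‖:ℝ)^k ≠ 0 := by positivity
    field_simp
  have hL0unorm : ‖L0u‖ = F0 := by
    apply tendsto_nhds_unique hL0u.norm
    apply Tendsto.congr' _ tendsto_const_nhds
    filter_upwards [eventually_ge_atTop (s+1)] with k hk
    exact (hnormseq u hunorm k hk).symm
  have hL0vnorm : ‖L0v‖ = F0 := by
    apply tendsto_nhds_unique hL0v.norm
    apply Tendsto.congr' _ tendsto_const_nhds
    filter_upwards [eventually_ge_atTop (s+1)] with k hk
    exact (hnormseq u0 hu0 k hk).symm
  have hL0une : L0u ≠ 0 := by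
    intro h; rw [h, norm_zero] at hL0unorm; exact absurd hL0unorm.symm (ne_of_gt hF0pos)
  have hL0vne : L0v ≠ 0 := by
    intro h; rw [h, norm_zero] at hL0vnorm; exact absurd hL0vnorm.symm (ne_of_gt hF0pos)
  refine ⟨by rw [hphi0u]; exact hL0une, by rw [hphi0v]; exact hL0vne, ?_⟩
  rcases eq_or_ne u u0 with heq | hne
  · rw [heq]
    simp
  -- main case
  have hε0 : 0 < ‖u - u0‖ := by
    rw [norm_pos_iff]
    exact sub_ne_zero.mpr hne
  have hκ := kap_lt_one hπ0 hπ1 hGood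
  -- the limit of the pairing sequence
  set G := L1u * L0v - L0u * L1v with hGdef
  have hGlim : Tendsto (fun k => π^(2*k+1) * Xf π q (2*k) u u0) atTop (𝓝 G) := by
    have h1 : Tendsto (fun k => (π^(k+1) * ghm π q (2*k+1) u) * (π^k * ghm π q (2*k) u0)
        - (π^k * ghm π q (2*k) u) * (π^(k+1) * ghm π q (2*k+1) u0)) atTop (𝓝 G) :=
      (hL1u.mul hL0v).sub (hL0u.mul hL1v)
    apply h1.congr
    intro k
    unfold Xf
    have e1 : (π:C)^(2*k+1) = π^(k+1) * π^k := by rw [← pow_add]; congr 1; omega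
    rw [e1]; ring
  have hGnorm_seq : ∀ k, ‖π^(2*k+1) * Xf π q (2*k) u u0‖ = ‖u - u0‖ := by
    intro k
    have hXB := (XE_bound hq2 hπ0 hπ1 hch (2*k)).1 u0 u hGood
    have hasym : π^(2*k+1) * Xf π q (2*k) u u0 = -(π^(2*k+1) * Xf π q (2*k) u0 u) := by
      rw [Xf_antisymm π q (2*k) u u0]; ring
    rw [hasym, norm_neg]
    have h2 : (π:C)^(2*k+1) * (π⁻¹)^(2*k+1) = 1 := by
      rw [← mul_pow, mul_inv_cancel₀ hπ, one_pow]
    have hmain : π^(2*k+1) * Xf π q (2*k) u0 u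
        = (u0 - u) + π^(2*k+1) * (Xf π q (2*k) u0 u - (-1)^(2*k) * (π⁻¹)^(2*k+1) * (u0-u)) := by
      have h1 : ((-1:C))^(2*k) = 1 := by rw [pow_mul]; norm_num
      rw [h1]
      linear_combination (u0 - u) * h2
    rw [hmain]
    have hsmall : ‖π^(2*k+1) * (Xf π q (2*k) u0 u - (-1)^(2*k) * (π⁻¹)^(2*k+1) * (u0-u))‖
        < ‖u0 - u‖ := by
      rw [norm_mul, norm_pow]
      calc ‖π‖^(2*k+1) * ‖Xf π q (2*k) u0 u - (-1)^(2*k) * (π⁻¹)^(2*k+1) * (u0-u)‖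
          ≤ kap π q u0 u * ‖u0 - u‖ := hXB
        _ < 1 * ‖u0 - u‖ := by
            apply mul_lt_mul_of_pos_right hκ
            rw [huu0]; exact hε0
        _ = ‖u0 - u‖ := one_mul _
    rw [unorm_add_eq_left hsmall, huu0]
  have hGnorm : ‖G‖ = ‖u - u0‖ := by
    apply tendsto_nhds_unique hGlim.norm
    apply Tendsto.congr (fun k => (hGnorm_seq k).symm)
    exact tendsto_const_nhds
  -- final computation
  rw [hphi1u, hphi0u, hphi1v, hphi0v]
  rw [div_sub_div _ _ hL0une hL0vne, norm_div, norm_mul]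
  rw [← hGdef, hGnorm, hL0unorm, hL0vnorm]
  -- convert the rpow on the RHS
  have hsum : ∑ i ∈ Finset.range (s+1), (q:ℝ)^i = ((myQ q (s+1) : ℕ) : ℝ) := by
    rw [myQ_eq_sum]
    push_cast
    ring
  rw [hsum]
  have hrpow : γ ^ (-(2:ℝ) * ((myQ q (s+1) : ℕ) : ℝ)) = (γ^(2 * myQ q (s+1)))⁻¹ := by
    rw [show -(2:ℝ) * ((myQ q (s+1) : ℕ) : ℝ) = -(((2 * myQ q (s+1) : ℕ)) : ℝ) by
      push_cast; ring]
    rw [Real.rpow_neg hγ0.le, Real.rpow_natCast]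
  rw [hrpow]
  have hpis : ((‖π‖:ℝ)^((s+1)/2))⁻¹ * (‖π‖^((s+1)/2))⁻¹ = (‖π‖^(s+1))⁻¹ := by
    rw [← mul_inv, ← pow_add]
    congr 2
    omega
  have hF0sq : F0 * F0 = γ^(2 * myQ q (s+1)) * (‖π‖^(s+1))⁻¹ := by
    rw [hF0def, show 2 * myQ q (s+1) = myQ q (s+1) + myQ q (s+1) by ring, pow_add, ← hpis]
    ring
  rw [hF0sq]
  have hγQ : (0:ℝ) < γ^(2 * myQ q (s+1)) := by positivity
  field_simp
end

section
/- Let n ≥ 1 be an integer, let ξ ∈ k, and set E = q^n + 2q^{n-1} + 2q^{n-2} + ⋯ + 2q + 1. Suppose a_0, a_1, …, a_{n-1}, s ∈ k⟦u⟧ satisfy the following congruences modulo u^{E+2}: a_{n-1} ≡ (ξ^{q^{n+1}} − ξ^{q^n})·u^{1+q+⋯+q^n}; a_m ≡ −u^{q^{m+1}}·a_{m+1} for all 0 ≤ m ≤ n−2; and u ≡ s·(1 + a_0). Then, modulo u^{E+2}, a_0 ≡ (−1)^{n-1}·(ξ^{q^{n+1}} − ξ^{q^n})·u^{E} and s ≡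 u + (−1)^{n}·(ξ^{q^{n+1}} − ξ^{q^n})·u^{E+1}. -/
open Filter


theorem chai_congruence_unit_part (p q : ℕ) (hp : p.Prime)
    (hq : ∃ r : ℕ, 0 < r ∧ q = p ^ r)
    (k : Type*) [Field k] [Fintype k] (hcard : Fintype.card k = q ^ 2)
    (n : ℕ) (hn : 1 ≤ n) (ξ : k)
    (E : ℕ) (hE : E = q ^ n + 2 * (∑ i ∈ Finset.Ico 1 n, q ^ i) + 1)
    (a : ℕ → PowerSeries k) (s : PowerSeries k)
    (h1 : (PowerSeries.X : PowerSeries k) ^ (E + 2) ∣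
      a (n - 1) - PowerSeries.C (R := k) (ξ ^ q ^ (n + 1) - ξ ^ q ^ n) *
        PowerSeries.X ^ (∑ i ∈ Finset.range (n + 1), q ^ i))
    (h2 : ∀ m : ℕ, m + 2 ≤ n → (PowerSeries.X : PowerSeries k) ^ (E + 2) ∣
      a m - (-(PowerSeries.X ^ (q ^ (m + 1)) * a (m + 1))))
    (h3 : (PowerSeries.X : PowerSeries k) ^ (E + 2) ∣ PowerSeries.X - s * (1 + a 0)) :
    ((PowerSeries.X : PowerSeries k) ^ (E + 2) ∣
      a 0 - PowerSeries.C (R := k) ((-1 : k) ^ (n - 1) * (ξ ^ q ^ (n + 1) - ξ ^ q ^ n)) *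
        PowerSeries.X ^ E) ∧
    ((PowerSeries.X : PowerSeries k) ^ (E + 2) ∣
      s - (PowerSeries.X + PowerSeries.C (R := k) ((-1 : k) ^ n * (ξ ^ q ^ (n + 1) - ξ ^ q ^ n)) *
        PowerSeries.X ^ (E + 1))) := by
  obtain ⟨r, hr, hqr⟩ := hq
  have hq2 : 2 ≤ q := by
    subst hqr
    calc 2 ≤ p := hp.two_le
    _ ≤ p ^ r := Nat.le_self_pow (by omega) p
  set c : k := ξ ^ q ^ (n + 1) - ξ ^ q ^ n with hc
  set S : ℕ := ∑ i ∈ Finset.range (n + 1), q ^ i with hS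
  -- the key downward induction
  have key : ∀ j, j ≤ n - 1 → (PowerSeries.X : PowerSeries k) ^ (E + 2) ∣
      a (n - 1 - j) - PowerSeries.C (R := k) ((-1 : k) ^ j * c) *
        PowerSeries.X ^ (S + ∑ i ∈ Finset.Ico (n - j) n, q ^ i) := by
    intro j
    induction j with
    | zero =>
      intro _
      simpa using h1
    | succ j ih =>
      intro hj
      have hjn : j ≤ n - 1 := by omega
      set m := n - 1 - (j + 1) with hm
      have hm2 : m + 2 ≤ n := by omega
      have hm1 : n - 1 - j = m + 1 := by omega
      have hm1' : n - (j + 1) = m + 1 := by omega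
      have hm2' : n - j = m + 2 := by omega
      have hsplit : ∑ i ∈ Finset.Ico (m + 1) n, q ^ i
          = q ^ (m + 1) + ∑ i ∈ Finset.Ico (m + 2) n, q ^ i := by
        rw [Finset.sum_eq_sum_Ico_succ_bot (by omega : m + 1 < n)]
      have H2 := h2 m hm2
      have IH := ih hjn
      rw [hm1, hm2'] at IH
      obtain ⟨t1, ht1⟩ := IH
      obtain ⟨t2, ht2⟩ := H2
      refine ⟨t2 - PowerSeries.X ^ (q ^ (m + 1)) * t1, ?_⟩
      rw [hm1', hsplit]
      have hCneg : PowerSeries.C (R := k) ((-1 : k) ^ (j + 1) * c)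
          = - PowerSeries.C (R := k) ((-1 : k) ^ j * c) := by
        rw [pow_succ]
        push_cast [map_mul, map_neg]
        simp
      rw [hCneg]
      have e1 : a (m + 1) = PowerSeries.X ^ (E + 2) * t1
          + PowerSeries.C (R := k) ((-1 : k) ^ j * c) * PowerSeries.X ^ (S + ∑ i ∈ Finset.Ico (m + 2) n, q ^ i) := by
        linear_combination ht1
      rw [e1] at ht2
      linear_combination ht2
  -- the value of the exponent at j = n - 1
  have hSE : S + ∑ i ∈ Finset.Ico 1 n, q ^ i = E := by
    have : S = 1 + (∑ i ∈ Finset.Ico 1 n, q ^ i) + q ^ n := by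
      rw [hS, Finset.sum_range_succ, Finset.range_eq_Ico,
        Finset.sum_eq_sum_Ico_succ_bot (by omega : 0 < n)]
      simp [add_comm, add_assoc, add_left_comm]
    omega
  have ha0 : (PowerSeries.X : PowerSeries k) ^ (E + 2) ∣
      a 0 - PowerSeries.C (R := k) ((-1 : k) ^ (n - 1) * c) * PowerSeries.X ^ E := by
    have := key (n - 1) le_rfl
    rw [show n - 1 - (n - 1) = 0 from by omega, show n - (n - 1) = 1 from by omega, hSE] at this
    exact this
  refine ⟨ha0, ?_⟩
  -- now the s part
  have hE2 : 2 ≤ E := by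
    have : 2 ≤ q ^ n := le_trans hq2 (Nat.le_self_pow (by omega) q)
    omega
  obtain ⟨e, he⟩ : ∃ e, E = e + 2 := ⟨E - 2, by omega⟩
  obtain ⟨t0, ht0⟩ := ha0
  obtain ⟨t3, ht3⟩ := h3
  subst he
  set d : k := (-1 : k) ^ (n - 1) * c with hd
  have ea0 : a 0 = PowerSeries.X ^ (e + 2 + 2) * t0 + PowerSeries.C (R := k) d * PowerSeries.X ^ (e + 2) := by
    linear_combination ht0
  rw [ea0] at ht3
  have hXs : PowerSeries.X - s = (PowerSeries.X : PowerSeries k) ^ 2 *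
      (PowerSeries.X ^ (e + 2) * t3 + s * PowerSeries.X ^ (e + 2) * t0
        + s * PowerSeries.C (R := k) d * PowerSeries.X ^ e) := by
    linear_combination ht3
  have hsign : PowerSeries.C (R := k) ((-1 : k) ^ n * c) = - PowerSeries.C (R := k) d := by
    rw [hd, show n = (n - 1) + 1 from by omega, pow_succ]
    push_cast [map_mul, map_neg]
    simp
  rw [hsign]
  refine ⟨-t3 - s * t0 + PowerSeries.C (R := k) d *
      (PowerSeries.X ^ (e + 2) * t3 + s * PowerSeries.X ^ (e + 2) * t0
        + s * PowerSeries.C (R := k) d * PowerSeries.X ^ e), ?_⟩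
  linear_combination -ht3 + PowerSeries.C (R := k) d * PowerSeries.X ^ (e + 2) * hXs
end

section
/- For every u ∈ ℂ_p with |u| < 1, the sequence (π^k·m_{2k}(u))_{k≥0} and the sequence (π^k·m_{2k-1}(u))_{k≥1} both converge in ℂ_p (so that the coordinates φ_0(u) = lim_{k→∞} π^k·m_{2k}(u) and φ_1(u) = lim_{k→∞} π^k·m_{2k-1}(u) of the Gross–Hopkins period map are defined on the whole open unit disk). -/
open Filter


lemma ghm_rec {C : Type*} [Field C] (π : C) (q k : ℕ) (u : C) :
    ghm π q (k+2) u = (u / π) * ghm π q (k+1) (u ^ q) + (1 / π) * ghm π q k (u ^ (q^2)) := by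
  rfl

/-- helper inequality for quotients of powers -/
lemma gh_div_pow_le {c d : ℝ} (hc0 : 0 ≤ c) (hc1 : c ≤ 1) (hd0 : 0 < d) (hd1 : d ≤ 1)
    {a b i j : ℕ} (hab : b ≤ a) (hij : j ≤ i) : c ^ a / d ^ j ≤ c ^ b / d ^ i :=
  div_le_div₀ (pow_nonneg hc0 b) (pow_le_pow_of_le_one hc0 hc1 hab)
    (pow_pos hd0 i) (pow_le_pow_of_le_one hd0.le hd1 hij)

/-- helper identity for cancelling powers across a quotient -/
lemma gh_pow_mul_div {x : ℝ} (hx : x ≠ 0) (a : ℝ) (m n : ℕ) :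
    x ^ m * (a / x ^ (m + n)) = a / x ^ n := by
  have h1 : x ^ (m + n) ≠ 0 := pow_ne_zero _ hx
  field_simp
  rw [pow_add]
  ring

/-- The key estimate: `‖π·m_{k+2}(u) - m_k(u)‖ ≤ ‖u‖^(2^k) / ‖π‖^(k+1)` for `‖u‖ ≤ 1`. -/
lemma ghD_bound {C : Type*} [NormedField C] [IsUltrametricDist C] {π : C} {q : ℕ}
    (hq : 2 ≤ q) (hπ : π ≠ 0) (hπ1 : ‖π‖ ≤ 1) :
    ∀ k : ℕ, ∀ u : C, ‖u‖ ≤ 1 →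
      ‖π * ghm π q (k + 2) u - ghm π q k u‖ ≤ ‖u‖ ^ 2 ^ k / ‖π‖ ^ (k + 1) := by
  have hπn : (0:ℝ) < ‖π‖ := norm_pos_iff.mpr hπ
  have hq4 : 4 ≤ q ^ 2 := by
    calc 4 = 2 ^ 2 := by norm_num
      _ ≤ q ^ 2 := Nat.pow_le_pow_left hq 2
  intro k
  induction k using Nat.twoStepInduction with
  | zero =>
    intro u hu
    have h1 : π * ghm π q (0 + 2) u - ghm π q 0 u = u ^ (q + 1) / π ^ 1 := by
      show π * ((u / π) * ((u ^ q) / π) + (1/π) * 1) - 1 = _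
      rw [pow_one]
      field_simp
      ring
    rw [h1, norm_div, norm_pow, norm_pow]
    exact gh_div_pow_le (norm_nonneg u) hu hπn hπ1 (by omega) (by omega)
  | one =>
    intro u hu
    have h1 : π * ghm π q (1 + 2) u - ghm π q 1 u
        = u ^ (q^2 + q + 1) / π ^ 2 + u ^ (q^2) / π ^ 1 := by
      show π * ((u / π) * ghm π q 2 (u^q) + (1/π) * ghm π q 1 (u ^ (q^2))) - u / π = _
      show π * ((u / π) * (((u^q) / π) * (((u^q) ^ q) / π) + (1/π) * 1)
          + (1/π) * ((u ^ (q^2)) / π)) - u / π = _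
      rw [pow_one]
      field_simp
      ring
    rw [h1]
    refine le_trans (IsUltrametricDist.norm_add_le_max _ _) (max_le ?_ ?_)
    · rw [norm_div, norm_pow, norm_pow]
      exact gh_div_pow_le (norm_nonneg u) hu hπn hπ1 (by omega) (by omega)
    · rw [norm_div, norm_pow, norm_pow]
      exact gh_div_pow_le (norm_nonneg u) hu hπn hπ1 (by omega) (by omega)
  | more n ih1 ih2 =>
    intro u hu
    have huq : ‖u ^ q‖ ≤ 1 := by
      rw [norm_pow]; exact pow_le_one₀ (norm_nonneg u) hu
    have huq2 : ‖u ^ (q^2)‖ ≤ 1 := by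
      rw [norm_pow]; exact pow_le_one₀ (norm_nonneg u) hu
    have hidx : n + 2 + 1 = n + 1 + 2 := by omega
    have h3 : ghm π q (n+2+2) u
        = (u / π) * ghm π q (n+1+2) (u ^ q) + (1 / π) * ghm π q (n+2) (u ^ (q^2)) := by
      rw [ghm_rec π q (n+2) u, hidx]
    have h4 : ghm π q (n+2) u
        = (u / π) * ghm π q (n+1) (u ^ q) + (1 / π) * ghm π q n (u ^ (q^2)) :=
      ghm_rec π q n u
    have key : π * ghm π q (n+2+2) u - ghm π q (n+2) u
        = (u / π) * (π * ghm π q (n+1+2) (u ^ q) - ghm π q (n+1) (u ^ q))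
          + (1 / π) * (π * ghm π q (n+2) (u ^ (q^2)) - ghm π q n (u ^ (q^2))) := by
      rw [h3, h4]
      field_simp
      ring
    rw [key]
    refine le_trans (IsUltrametricDist.norm_add_le_max _ _) (max_le ?_ ?_)
    · have hb := ih2 (u ^ q) huq
      rw [norm_mul, norm_div]
      calc (‖u‖ / ‖π‖) * ‖π * ghm π q (n+1+2) (u ^ q) - ghm π q (n+1) (u ^ q)‖
          ≤ (‖u‖ / ‖π‖) * (‖u ^ q‖ ^ 2 ^ (n+1) / ‖π‖ ^ (n+1+1)) := by
            apply mul_le_mul_of_nonneg_left hb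
            positivity
        _ = ‖u‖ ^ (q * 2 ^ (n+1) + 1) / ‖π‖ ^ (n + 2 + 1) := by
            rw [norm_pow, ← pow_mul]
            ring
        _ ≤ ‖u‖ ^ 2 ^ (n+2) / ‖π‖ ^ (n + 2 + 1) := by
            refine gh_div_pow_le (norm_nonneg u) hu hπn hπ1 ?_ le_rfl
            calc 2 ^ (n+2) = 2 * 2 ^ (n+1) := by ring
              _ ≤ q * 2 ^ (n+1) := Nat.mul_le_mul_right _ hq
              _ ≤ q * 2 ^ (n+1) + 1 := Nat.le_succ _
    · have hb := ih1 (u ^ (q^2)) huq2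
      rw [norm_mul, norm_div, norm_one]
      calc (1 / ‖π‖) * ‖π * ghm π q (n+2) (u ^ (q^2)) - ghm π q n (u ^ (q^2))‖
          ≤ (1 / ‖π‖) * (‖u ^ (q^2)‖ ^ 2 ^ n / ‖π‖ ^ (n+1)) := by
            apply mul_le_mul_of_nonneg_left hb
            positivity
        _ = ‖u‖ ^ (q^2 * 2 ^ n) / ‖π‖ ^ (n + 2) := by
            rw [norm_pow, ← pow_mul]
            ring
        _ ≤ ‖u‖ ^ 2 ^ (n+2) / ‖π‖ ^ (n + 2 + 1) := by
            refine gh_div_pow_le (norm_nonneg u) hu hπn hπ1 ?_ (by omega)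
            calc 2 ^ (n+2) = 4 * 2 ^ n := by ring
              _ ≤ q^2 * 2 ^ n := Nat.mul_le_mul_right _ hq4

theorem period_map_coordinates_converge {p : ℕ} [Fact p.Prime] {C : Type*} [NormedField C] [IsUltrametricDist C]
    [CompleteSpace C] [IsAlgClosed C] [Algebra ℚ_[p] C]
    (hiso : ∀ x : ℚ_[p], ‖algebraMap ℚ_[p] C x‖ = ‖x‖)
    (K : IntermediateField ℚ_[p] C) (hKfin : FiniteDimensional ℚ_[p] K)
    (q : ℕ) (hq : ∃ r : ℕ, 0 < r ∧ q = p ^ r)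
    (π : C) (hπK : π ∈ K) (hπ0 : 0 < ‖π‖) (hπ1 : ‖π‖ < 1)
    (hπunif : ∀ x ∈ K, ‖x‖ < 1 → ‖x‖ ≤ ‖π‖)
    (hres : ∃ S : Finset C, S.card = q ∧ (∀ s ∈ S, s ∈ K ∧ ‖s‖ ≤ 1) ∧
      (∀ x ∈ K, ‖x‖ ≤ 1 → ∃ s ∈ S, ‖x - s‖ < 1) ∧
      (∀ s ∈ S, ∀ t ∈ S, s ≠ t → ‖s - t‖ = 1)) :
    ∀ u : C, ‖u‖ < 1 →
      (∃ L : C, Tendsto (fun k => π ^ k * ghm π q (2*k) u) atTop (nhds L)) ∧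
      (∃ L : C, Tendsto (fun k => π ^ (k+1) * ghm π q (2*k+1) u) atTop (nhds L)) := by
  intro u hu
  have hπne : π ≠ 0 := by
    intro h; rw [h, norm_zero] at hπ0; exact lt_irrefl 0 hπ0
  have hq2 : 2 ≤ q := by
    obtain ⟨r, hr, rfl⟩ := hq
    have hp2 : 2 ≤ p := (Fact.out : p.Prime).two_le
    calc 2 = 2 ^ 1 := rfl
      _ ≤ 2 ^ r := Nat.pow_le_pow_right (by norm_num) hr
      _ ≤ p ^ r := Nat.pow_le_pow_left hp2 r
  have hu1 : ‖u‖ ≤ 1 := hu.le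
  have hD := ghD_bound hq2 hπne hπ1.le
  set d : ℕ → ℝ := fun n => ‖u‖ ^ 2 ^ (2*n) / ‖π‖ ^ (n+1) with hd
  have hd_nonneg : ∀ n, 0 ≤ d n := fun n => by positivity
  -- summability of the dominating sequence
  have hdsum : Summable d := by
    obtain ⟨k, hk⟩ := exists_pow_lt_of_lt_one (x := ‖π‖ ^ 2) (by positivity) hu
    rw [← summable_nat_add_iff k]
    refine Summable.of_nonneg_of_le (fun n => hd_nonneg _) (fun n => ?_)
      (summable_geometric_of_lt_one (norm_nonneg π) hπ1)
    have hnk : k * (n + k + 1) ≤ 2 ^ (2 * (n + k)) := by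
      have h1 : k < 2 ^ (n + k) := lt_of_le_of_lt (Nat.le_add_left k n) Nat.lt_two_pow_self
      have h2 : n + k + 1 ≤ 2 ^ (n + k) := Nat.lt_two_pow_self
      calc k * (n + k + 1) ≤ 2 ^ (n + k) * 2 ^ (n + k) := Nat.mul_le_mul h1.le h2
        _ = 2 ^ (2 * (n + k)) := by rw [← pow_add]; ring_nf
    calc d (n + k)
        ≤ ‖u‖ ^ (k * (n + k + 1)) / ‖π‖ ^ (n + k + 1) :=
          gh_div_pow_le (norm_nonneg u) hu1 hπ0 hπ1.le hnk le_rfl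
      _ = (‖u‖ ^ k) ^ (n + k + 1) / ‖π‖ ^ (n + k + 1) := by rw [← pow_mul]
      _ ≤ (‖π‖ ^ 2) ^ (n + k + 1) / ‖π‖ ^ (n + k + 1) :=
          div_le_div₀ (by positivity) (pow_le_pow_left₀ (by positivity) hk.le _)
            (by positivity) le_rfl
      _ = ‖π‖ ^ (n + k + 1) := by
          rw [← pow_mul, div_eq_iff (by positivity : (0:ℝ) < ‖π‖ ^ (n+k+1)).ne', ← pow_add]
          congr 1
          omega
      _ ≤ ‖π‖ ^ n := pow_le_pow_of_le_one (norm_nonneg π) hπ1.le (by omega)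
  constructor
  · -- even-index sequence
    apply cauchySeq_tendsto_of_complete
    apply cauchySeq_of_dist_le_of_summable d _ hdsum
    intro n
    rw [dist_eq_norm, norm_sub_rev]
    have heq : π ^ (n+1) * ghm π q (2*(n+1)) u - π ^ n * ghm π q (2*n) u
        = π ^ n * (π * ghm π q (2*n+2) u - ghm π q (2*n) u) := by
      rw [show 2*(n+1) = 2*n+2 from by ring, pow_succ]; ring
    rw [heq, norm_mul, norm_pow]
    calc ‖π‖ ^ n * ‖π * ghm π q (2*n+2) u - ghm π q (2*n) u‖
        ≤ ‖π‖ ^ n * (‖u‖ ^ 2 ^ (2*n) / ‖π‖ ^ (2*n+1)) :=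
          mul_le_mul_of_nonneg_left (hD (2*n) u hu1) (by positivity)
      _ = d n := by
          rw [hd, show 2*n+1 = n + (n+1) from by omega,
            gh_pow_mul_div (ne_of_gt hπ0)]
  · -- odd-index sequence
    apply cauchySeq_tendsto_of_complete
    apply cauchySeq_of_dist_le_of_summable d _ hdsum
    intro n
    rw [dist_eq_norm, norm_sub_rev]
    have heq : π ^ (n+1+1) * ghm π q (2*(n+1)+1) u - π ^ (n+1) * ghm π q (2*n+1) u
        = π ^ (n+1) * (π * ghm π q (2*n+1+2) u - ghm π q (2*n+1) u) := by
      rw [show 2*(n+1)+1 = 2*n+1+2 from by ring, pow_succ]; ring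
    rw [heq, norm_mul, norm_pow]
    calc ‖π‖ ^ (n+1) * ‖π * ghm π q (2*n+1+2) u - ghm π q (2*n+1) u‖
        ≤ ‖π‖ ^ (n+1) * (‖u‖ ^ 2 ^ (2*n+1) / ‖π‖ ^ (2*n+1+1)) :=
          mul_le_mul_of_nonneg_left (hD (2*n+1) u hu1) (by positivity)
      _ = ‖u‖ ^ 2 ^ (2*n+1) / ‖π‖ ^ (n+1) := by
          rw [show 2*n+1+1 = (n+1) + (n+1) from by omega,
            gh_pow_mul_div (ne_of_gt hπ0)]
      _ ≤ d n := by
          rw [hd]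
          exact gh_div_pow_le (norm_nonneg u) hu1 hπ0 hπ1.le
            (Nat.pow_le_pow_right (by norm_num) (by omega)) le_rfl
end
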